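/- arXiv:1904.09231 — 6 statements merged into one kernel-verified Lean document; each statement's English description precedes it below -/
import Mathlib

section
/- For strict, transitively closed episodes G and H, G ∼ H if and only if G and H have identical nodes and E(G) = E(H). -/
open scoped Classical

/-- An episode: a finite directed acyclic graph with nodes drawn from `ℕ`,
labelled by symbols of an alphabet `α`. -/
structure Episode (α : Type*) where
  nodes : Finset ℕ
  edge : ℕ → ℕ → Prop
  lab : ℕ → α
  edge_mem : ∀ ⦃x y : ℕ⦄, edge x y → x ∈ nodes ∧ y ∈ nodes

namespace Episode

variable {α : Type*}

/-- Transitively closed: whenever there is a directed path from `u` to `v`,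
`(u,v)` is an edge. -/
def TransClosed (G : Episode α) : Prop :=
  ∀ ⦃u v : ℕ⦄, Relation.TransGen G.edge u v → G.edge u v

/-- Acyclic: no directed cycles. -/
def Acyclic (G : Episode α) : Prop := ∀ v : ℕ, ¬ Relation.TransGen G.edge v v

/-- Strict: any two distinct nodes sharing the same label are joined by a
directed path. -/
def Strict (G : Episode α) : Prop :=
  ∀ u ∈ G.nodes, ∀ v ∈ G.nodes, u ≠ v → G.lab u = G.lab v →
    Relation.TransGen G.edge u v ∨ Relation.TransGen G.edge v u

/-- The class `𝒮` of strict, transitively closed (acyclic) episodes. -/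
def inS (G : Episode α) : Prop := G.Acyclic ∧ G.TransClosed ∧ G.Strict

/-- A sequence `s` covers an episode `G`: there is an injective map from the
nodes of `G` to indices of `s` matching labels and respecting edges. -/
def Covers (s : List α) (G : Episode α) : Prop :=
  ∃ f : {v // v ∈ G.nodes} → Fin s.length,
    Function.Injective f ∧ (∀ v, s.get (f v) = G.lab v.1) ∧
      ∀ u v, G.edge u.1 v.1 → f u < f v

/-- `f` witnesses that `s` is an instance of `G`: a bijective valid mapping. -/
def IsInstanceMap (s : List α) (G : Episode α)
    (f : {v // v ∈ G.nodes} → Fin s.length) : Prop :=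
  Function.Bijective f ∧ (∀ v, s.get (f v) = G.lab v.1) ∧
    ∀ u v, G.edge u.1 v.1 → f u < f v

/-- The subgraph of `H` induced on a set `U` of nodes. -/
def restrict (H : Episode α) (U : Finset ℕ) : Episode α where
  nodes := U
  edge := fun x y => x ∈ U ∧ y ∈ U ∧ H.edge x y
  lab := H.lab
  edge_mem := by rintro x y ⟨h1, h2, -⟩; exact ⟨h1, h2⟩

/-- `G ⪯ H`: `G` is a subepisode of `H`.  There is a subgraph of `H` with as
many nodes as `G` such that every sequence covering that subgraph covers `G`. -/
def Subep (G H : Episode α) : Prop :=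
  ∃ U : Finset ℕ, U ⊆ H.nodes ∧ U.card = G.nodes.card ∧
    ∀ s : List α, Covers s (H.restrict U) → Covers s G

/-- `G ≺ H`: proper subepisode. -/
def ProperSubep (G H : Episode α) : Prop := Subep G H ∧ ¬ Subep H G

/-- `G ∼ H`: every sequence covers `G` iff it covers `H`. -/
def Equivalent (G H : Episode α) : Prop := ∀ s : List α, Covers s G ↔ Covers s H

/-- The nodes of `G` are `0, …, card − 1` listed in the canonical order:
labels increase, and nodes with equal labels are ordered by the edges. -/
def CanonicallyIndexed [LinearOrder α] (G : Episode α) : Prop :=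
  G.nodes = Finset.range G.nodes.card ∧
    ∀ u ∈ G.nodes, ∀ v ∈ G.nodes, u < v →
      G.lab u < G.lab v ∨ (G.lab u = G.lab v ∧ G.edge u v)

/-- An occurrence (instance) of `G` inside `s` whose span is smaller than the
window size `ρ`: an injective valid mapping with `max f − min f < ρ`. -/
def IsOcc (s : List α) (ρ : ℕ) (G : Episode α)
    (f : {v // v ∈ G.nodes} → Fin s.length) : Prop :=
  Function.Injective f ∧ (∀ v, s.get (f v) = G.lab v.1) ∧
    (∀ u v, G.edge u.1 v.1 → f u < f v) ∧
    ∀ u v, (f u : ℕ) < (f v : ℕ) + ρ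

/-- `G` occurs in `s` within some window of length at most `ρ`. -/
def Occurs (s : List α) (ρ : ℕ) (G : Episode α) : Prop := ∃ f, IsOcc s ρ G f

/-- The symbol `x` occurs in `s` inside the interval `[min f, max f]` of an
occurrence `f`. -/
def SymInWindow (s : List α) {G : Episode α}
    (f : {v // v ∈ G.nodes} → Fin s.length) (x : α) : Prop :=
  ∃ i : Fin s.length, s.get i = x ∧ (∃ u, f u ≤ i) ∧ ∃ v, i ≤ f v

/-- The node closure `cl_N`: augment `G` with one new isolated node labelled
`x` for each symbol `x` of `s`, not labelling a node of `G`, that occurs inside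
the interval of every occurrence of `G` (with span `< ρ`). -/
noncomputable def clN [LinearOrder α] (s : List α) (ρ : ℕ) (G : Episode α) :
    Episode α :=
  let newLabs : List α := (s.toFinset.filter
      (fun x => (∀ f, IsOcc s ρ G f → SymInWindow s f x) ∧
        ∀ v ∈ G.nodes, G.lab v ≠ x)).sort (· ≤ ·)
  let base : ℕ := G.nodes.sup id + 1
  { nodes := G.nodes ∪ (Finset.range newLabs.length).image (fun i => base + i)
    edge := G.edge
    lab := fun v =>
      if h : base ≤ v ∧ v - base < newLabs.length ∧ v ∉ G.nodes then
        newLabs.get ⟨v - base, h.2.1⟩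
      else G.lab v
    edge_mem := by
      intro x y h
      exact ⟨Finset.mem_union_left _ (G.edge_mem h).1,
        Finset.mem_union_left _ (G.edge_mem h).2⟩ }

/-- The edge closure `cl_E`: the maximal episode covered by all instances of
`G` in `s` with span `< ρ`; it has an edge `(x,y)` whenever the (unique) valid
mapping of every such instance places `x` before `y`. -/
def clE (s : List α) (ρ : ℕ) (G : Episode α) : Episode α where
  nodes := G.nodes
  edge := fun x y => ∃ (hx : x ∈ G.nodes) (hy : y ∈ G.nodes),
    ∀ f, IsOcc s ρ G f → f ⟨x, hx⟩ < f ⟨y, hy⟩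
  lab := G.lab
  edge_mem := by rintro x y ⟨hx, hy, -⟩; exact ⟨hx, hy⟩

/-- The `i`-closure `icl(G) = cl_E(cl_N(G))`. -/
noncomputable def icl [LinearOrder α] (s : List α) (ρ : ℕ) (G : Episode α) :
    Episode α :=
  clE s ρ (clN s ρ G)

/-- The window `s[a, b]` (0-based, inclusive endpoints). -/
def window (s : List α) (a b : ℕ) : List α := (s.take (b + 1)).drop a

/-- `s[a,b]` is a minimal window of `G` in `s`: it covers `G` and no proper
subwindow of it covers `G`. -/
def IsMinimalWindow (s : List α) (G : Episode α) (a b : ℕ) : Prop :=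
  a ≤ b ∧ b < s.length ∧ Covers (window s a b) G ∧
    ∀ a' b', a ≤ a' → b' ≤ b → a' ≤ b' → (a', b') ≠ (a, b) →
      ¬ Covers (window s a' b') G

/-- Fixed-window frequency: the number of windows of length `ρ` (indexed by
their right endpoints, windows may stick out of the sequence) covering `G`. -/
noncomputable def freqF (s : List α) (ρ : ℕ) (G : Episode α) : ℕ :=
  ((Finset.range (s.length + ρ - 1)).filter
    (fun b => Covers (window s (b + 1 - ρ) b) G)).card

/-- Disjoint-window frequency: the maximal number of pairwise disjoint
intervals of length at most `ρ` whose windows cover `G`. -/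
noncomputable def freqD (s : List α) (ρ : ℕ) (G : Episode α) : ℕ :=
  sSup {n : ℕ | ∃ I : Fin n → ℕ × ℕ,
    (∀ i, (I i).1 ≤ (I i).2 ∧ (I i).2 < (I i).1 + ρ ∧ (I i).2 < s.length ∧
      Covers (window s (I i).1 (I i).2) G) ∧
    ∀ i j, i ≠ j → (I i).2 < (I j).1 ∨ (I j).2 < (I i).1}

/-- `G` is f-closed w.r.t. the fixed-window frequency. -/
noncomputable def FClosedF (s : List α) (ρ : ℕ) (G : Episode α) : Prop :=
  ¬ ∃ H : Episode α, inS H ∧ ProperSubep G H ∧ freqF s ρ H = freqF s ρ G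

/-- `G` is f-closed w.r.t. the disjoint-window frequency. -/
noncomputable def FClosedD (s : List α) (ρ : ℕ) (G : Episode α) : Prop :=
  ¬ ∃ H : Episode α, inS H ∧ ProperSubep G H ∧ freqD s ρ H = freqD s ρ G

/-- `G − e`: remove an edge. -/
def eraseEdge (G : Episode α) (e : ℕ × ℕ) : Episode α where
  nodes := G.nodes
  edge := fun x y => G.edge x y ∧ (x, y) ≠ e
  lab := G.lab
  edge_mem := by rintro x y ⟨h, -⟩; exact G.edge_mem h

/-- `G − v`: remove a node together with all incident edges. -/
def eraseNode (G : Episode α) (w : ℕ) : Episode α where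
  nodes := G.nodes.erase w
  edge := fun x y => G.edge x y ∧ x ≠ w ∧ y ≠ w
  lab := G.lab
  edge_mem := by
    rintro x y ⟨h, hx, hy⟩
    exact ⟨Finset.mem_erase.mpr ⟨hx, (G.edge_mem h).1⟩,
      Finset.mem_erase.mpr ⟨hy, (G.edge_mem h).2⟩⟩

/-- `G + e`: add an edge. -/
def addEdge (G : Episode α) (e : ℕ × ℕ) : Episode α where
  nodes := G.nodes ∪ {e.1, e.2}
  edge := fun x y => G.edge x y ∨ (x, y) = e
  lab := G.lab
  edge_mem := by
    rintro x y (h | h)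
    · exact ⟨Finset.mem_union_left _ (G.edge_mem h).1,
        Finset.mem_union_left _ (G.edge_mem h).2⟩
    · cases h
      exact ⟨Finset.mem_union_right _ (by simp), Finset.mem_union_right _ (by simp)⟩

/-- A skeleton edge: an edge `(v,w)` such that there is no two-step path
`v → u → w`. -/
def IsSkeletonEdge (G : Episode α) (e : ℕ × ℕ) : Prop :=
  G.edge e.1 e.2 ∧ ¬ ∃ u, G.edge e.1 u ∧ G.edge u e.2

/-- A proper skeleton edge: a skeleton edge whose endpoints carry different
labels. -/
def IsProperSkeletonEdge (G : Episode α) (e : ℕ × ℕ) : Prop :=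
  IsSkeletonEdge G e ∧ G.lab e.1 ≠ G.lab e.2

/-- The set of edges of `G`, as a set of pairs. -/
def edgeSet (G : Episode α) : Set (ℕ × ℕ) := {p | G.edge p.1 p.2}

/-- Lexicographic order on edges (using the canonical order of the nodes). -/
def edgeLT (e f : ℕ × ℕ) : Prop := e.1 < f.1 ∨ (e.1 = f.1 ∧ e.2 < f.2)

/-- `e` is the last (lexicographically largest) proper skeleton edge of `G`. -/
def IsLastEdge (G : Episode α) (e : ℕ × ℕ) : Prop :=
  IsProperSkeletonEdge G e ∧
    ∀ f, IsProperSkeletonEdge G f → f = e ∨ edgeLT f e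

/-- A solitary node: a node with no incident edges. -/
def Solitary (G : Episode α) (v : ℕ) : Prop :=
  v ∈ G.nodes ∧ ∀ u, ¬ G.edge u v ∧ ¬ G.edge v u

/-- A source node: a node with no incoming edges. -/
def IsSource (G : Episode α) (v : ℕ) : Prop := v ∈ G.nodes ∧ ∀ u, ¬ G.edge u v

/-- A proper skeleton edge `e` of `G` is derivable if `G ⪯ icl(G − e)`. -/
noncomputable def DerivableEdge [LinearOrder α] (s : List α) (ρ : ℕ)
    (G : Episode α) (e : ℕ × ℕ) : Prop :=
  IsProperSkeletonEdge G e ∧ Subep G (icl s ρ (G.eraseEdge e))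

/-- A solitary node `v` of `G` is derivable if `G ⪯ icl(G − v)`. -/
noncomputable def DerivableNode [LinearOrder α] (s : List α) (ρ : ℕ)
    (G : Episode α) (v : ℕ) : Prop :=
  Solitary G v ∧ Subep G (icl s ρ (G.eraseNode v))

/-- `GreedyFrom s t G f`: `f` is the greedy mapping of `G` in the suffix of `s`
starting at (0-based) position `t`, recording absolute indices of `s`:
repeatedly map the source node of `G` whose label has the earliest remaining
occurrence to that position, and recurse on the episode with that node
removed and the part of the sequence after that position. -/
inductive GreedyFrom (s : List α) : ℕ → Episode α → (ℕ → ℕ) → Prop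
  | empty (t : ℕ) (G : Episode α) (f : ℕ → ℕ) (hG : G.nodes = ∅) :
      GreedyFrom s t G f
  | step (t : ℕ) (G : Episode α) (f : ℕ → ℕ) (v k : ℕ)
      (hv : G.IsSource v) (ht : t ≤ k) (hk : k < s.length)
      (hlab : s.get ⟨k, hk⟩ = G.lab v)
      (hmin : ∀ j (hj : j < s.length), t ≤ j → j < k →
        ¬ ∃ w, G.IsSource w ∧ s.get ⟨j, hj⟩ = G.lab w)
      (hfv : f v = k)
      (hrec : GreedyFrom s (k + 1) (G.eraseNode v) f) :
      GreedyFrom s t G f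

/-- One step of removing a derivable proper skeleton edge or a derivable
solitary node. -/
noncomputable def RemStep [LinearOrder α] (s : List α) (ρ : ℕ) :
    Episode α → Episode α → Prop := fun G G' =>
  (∃ e, DerivableEdge s ρ G e ∧ G' = G.eraseEdge e) ∨
  (∃ v, DerivableNode s ρ G v ∧ G' = G.eraseNode v)

end Episode

section AuxProof
open Episode
variable {α : Type*}


lemma aux_cover [LinearOrder α] (nodes : Finset ℕ) (lab : ℕ → α) (q : ℕ → ℕ → Prop)
    (htrans : Transitive q) (hirr : Irreflexive q) :
    ∃ (sq : List α) (f : {v // v ∈ nodes} → Fin sq.length),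
      sq.length = nodes.card ∧ Function.Bijective f ∧
      (∀ v, sq.get (f v) = lab v.1) ∧
      ∀ u v : {v // v ∈ nodes}, q u.1 v.1 → f u < f v := by
  classical
  haveI : IsPartialOrder ℕ (fun a b => q a b ∨ a = b) :=
    { refl := fun a => Or.inr rfl
      trans := by
        rintro a b c (h1 | rfl) (h2 | rfl)
        · exact Or.inl (htrans h1 h2)
        · exact Or.inl h1
        · exact Or.inl h2
        · exact Or.inr rfl
      antisymm := by
        rintro a b (h1 | h1) (h2 | h2)
        · exact absurd (htrans h1 h2) (hirr a)
        · exact h2.symm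
        · exact h1
        · exact h1 }
  obtain ⟨r, hlin, hle⟩ := extend_partialOrder (fun a b => q a b ∨ a = b)
  haveI : IsLinearOrder ℕ r := hlin
  haveI : DecidableRel r := fun a b => Classical.propDecidable _
  set l : List ℕ := Finset.sort nodes r with hl
  have hmem : ∀ v : {v // v ∈ nodes}, v.1 ∈ l := fun v => (Finset.mem_sort r).mpr v.2
  have hidx : ∀ v : {v // v ∈ nodes}, List.idxOf v.1 l < (l.map lab).length := by
    intro v
    rw [List.length_map]
    exact List.idxOf_lt_length_iff.mpr (hmem v)
  refine ⟨l.map lab, fun v => ⟨List.idxOf v.1 l, hidx v⟩, ?_, ?_, ?_, ?_⟩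
  · rw [List.length_map]; exact Finset.length_sort r
  · have hinj : Function.Injective
        (fun v : {v // v ∈ nodes} => (⟨List.idxOf v.1 l, hidx v⟩ : Fin (l.map lab).length)) := by
      intro u v h
      have h' : List.idxOf u.1 l = List.idxOf v.1 l := congrArg Fin.val h
      have hu := List.idxOf_get (List.idxOf_lt_length_iff.mpr (hmem u))
      have hv := List.idxOf_get (List.idxOf_lt_length_iff.mpr (hmem v))
      apply Subtype.ext
      rw [← hu, ← hv]
      congr 1
      exact Fin.ext h'
    refine (Fintype.bijective_iff_injective_and_card _).mpr ⟨hinj, ?_⟩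
    rw [Fintype.card_coe, Fintype.card_fin, List.length_map]
    exact (Finset.length_sort r).symm
  · intro v
    have hv := List.idxOf_get (List.idxOf_lt_length_iff.mpr (hmem v))
    have : (l.map lab).get ⟨List.idxOf v.1 l, hidx v⟩
        = lab (l.get ⟨List.idxOf v.1 l, List.idxOf_lt_length_iff.mpr (hmem v)⟩) := by
      simp
    rw [this, hv]
  · intro u v hq
    have hne : u.1 ≠ v.1 := fun e => hirr u.1 (e ▸ hq)
    have hr : r u.1 v.1 := hle _ _ (Or.inl hq)
    have hsorted : l.Pairwise r := Finset.pairwise_sort nodes r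
    set i := List.idxOf u.1 l with hi
    set j := List.idxOf v.1 l with hj
    have hgu : l.get ⟨i, List.idxOf_lt_length_iff.mpr (hmem u)⟩ = u.1 :=
      List.idxOf_get _
    have hgv : l.get ⟨j, List.idxOf_lt_length_iff.mpr (hmem v)⟩ = v.1 :=
      List.idxOf_get _
    have : i < j := by
      rcases lt_trichotomy i j with h | h | h
      · exact h
      · exact absurd (by rw [← hgu, ← hgv]; congr 1; exact Fin.ext h) hne
      · have := hsorted.rel_get_of_lt
          (a := ⟨j, List.idxOf_lt_length_iff.mpr (hmem v)⟩)
          (b := ⟨i, List.idxOf_lt_length_iff.mpr (hmem u)⟩) h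
        rw [hgu, hgv] at this
        exact absurd (_root_.antisymm hr this) hne
    exact this


lemma aux_uniq_min [LinearOrder α] (s : List α) (N : Finset ℕ) (lab : ℕ → α)
    (f g : {v // v ∈ N} → Fin s.length)
    (hfinj : Function.Injective f) (hgsurj : Function.Surjective g)
    (hfl : ∀ v, s.get (f v) = lab v.1) (hgl : ∀ v, s.get (g v) = lab v.1)
    (hfm : ∀ u v : {v // v ∈ N}, u.1 < v.1 → lab u.1 = lab v.1 → f u < f v)
    (hgm : ∀ u v : {v // v ∈ N}, u.1 < v.1 → lab u.1 = lab v.1 → g u < g v)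
    (v : {v // v ∈ N})
    (hmin : ∀ w, f w ≠ g w → min (f v) (g v) ≤ min (f w) (g w))
    (hlt : f v < g v) : False := by
  obtain ⟨w, hw⟩ := hgsurj (f v)
  have hlabeq : lab w.1 = lab v.1 := by rw [← hgl w, hw, hfl v]
  have hwv : w ≠ v := by rintro rfl; rw [hw] at hlt; exact lt_irrefl _ hlt
  rcases lt_trichotomy w.1 v.1 with h | h | h
  · have h1 : f w < f v := hfm w v h hlabeq
    have h2 : f w ≠ g w := by rw [hw]; exact ne_of_lt h1
    have h3 := hmin w h2
    rw [min_eq_left hlt.le] at h3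
    exact absurd (h3.trans (min_le_left _ _)) (not_le.mpr h1)
  · exact hwv (Subtype.ext h)
  · have h1 : g v < g w := hgm v w h hlabeq.symm
    rw [hw] at h1
    exact lt_asymm hlt h1

lemma aux_uniq [LinearOrder α] (s : List α) (N : Finset ℕ) (lab : ℕ → α)
    (f g : {v // v ∈ N} → Fin s.length)
    (hf : Function.Bijective f) (hg : Function.Bijective g)
    (hfl : ∀ v, s.get (f v) = lab v.1) (hgl : ∀ v, s.get (g v) = lab v.1)
    (hfm : ∀ u v : {v // v ∈ N}, u.1 < v.1 → lab u.1 = lab v.1 → f u < f v)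
    (hgm : ∀ u v : {v // v ∈ N}, u.1 < v.1 → lab u.1 = lab v.1 → g u < g v) :
    ∀ v, f v = g v := by
  by_contra hne
  push_neg at hne
  obtain ⟨v0, hv0⟩ := hne
  have hT : (Finset.univ.filter (fun v : {v // v ∈ N} => f v ≠ g v)).Nonempty :=
    ⟨v0, by simp [hv0]⟩
  obtain ⟨v, hvmem, hvmin⟩ := Finset.exists_min_image _ (fun v => min (f v) (g v)) hT
  have hvne : f v ≠ g v := (Finset.mem_filter.mp hvmem).2
  have hmin' : ∀ w, f w ≠ g w → min (f v) (g v) ≤ min (f w) (g w) := fun w hw =>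
    hvmin w (Finset.mem_filter.mpr ⟨Finset.mem_univ _, hw⟩)
  rcases lt_trichotomy (f v) (g v) with h | h | h
  · exact aux_uniq_min s N lab f g hf.1 hg.2 hfl hgl hfm hgm v hmin' h
  · exact hvne h
  · refine aux_uniq_min s N lab g f hg.1 hf.2 hgl hfl hgm hfm v (fun w hw => ?_) h
    rw [min_comm (g v) (f v), min_comm (g w) (f w)]
    exact hmin' w (Ne.symm hw)

lemma aux_card_lab [LinearOrder α] (N : Finset ℕ) (lab : ℕ → α) (s : List α)
    (f : {v // v ∈ N} → Fin s.length)
    (hbij : Function.Bijective f) (hlab : ∀ v, s.get (f v) = lab v.1) (a : α) :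
    (N.filter (fun x => a = lab x)).card
      = (Finset.univ.filter (fun i : Fin s.length => a = s.get i)).card := by
  classical
  rw [← Fintype.card_coe (N.filter _), ← Fintype.card_subtype]
  refine Fintype.card_congr ?_
  calc {x // x ∈ N.filter (fun x => a = lab x)}
      ≃ {x // x ∈ N ∧ a = lab x} := Equiv.subtypeEquivRight (fun x => Finset.mem_filter)
    _ ≃ {v : {x // x ∈ N} // a = lab v.1} :=
        (Equiv.subtypeSubtypeEquivSubtypeInter _ _).symm
    _ ≃ {i : Fin s.length // a = s.get i} :=
        Equiv.subtypeEquiv (Equiv.ofBijective f hbij) (fun v => by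
          rw [show ((Equiv.ofBijective f hbij) v : Fin s.length) = f v from rfl, hlab v])



lemma aux_edge_trans (G : Episode α) (h : inS G) : Transitive G.edge :=
  fun _ _ _ hab hbc => h.2.1 ((Relation.TransGen.single hab).tail hbc)

lemma aux_edge_irrefl (G : Episode α) (h : inS G) : Irreflexive G.edge :=
  fun a ha => h.1 a (Relation.TransGen.single ha)

lemma aux_edge_sub [LinearOrder α] (G H : Episode α) (hG : inS G) (hH : inS H)
    (cG : CanonicallyIndexed G) (cH : CanonicallyIndexed H)
    (heq : Equivalent G H) (hn : G.nodes = H.nodes)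
    (hl : ∀ v ∈ G.nodes, G.lab v = H.lab v) :
    ∀ x y, H.edge x y → G.edge x y := by
  intro x y hxy
  by_contra hne
  have hxH := (H.edge_mem hxy).1
  have hyH := (H.edge_mem hxy).2
  have hxG : x ∈ G.nodes := by rw [hn]; exact hxH
  have hyG : y ∈ G.nodes := by rw [hn]; exact hyH
  have hxyne : x ≠ y := by rintro rfl; exact hH.1 x (Relation.TransGen.single hxy)
  have htr := aux_edge_trans G hG
  have hir := aux_edge_irrefl G hG
  set q : ℕ → ℕ → Prop :=
    fun a b => G.edge a b ∨ ((G.edge a y ∨ a = y) ∧ (G.edge x b ∨ x = b)) with hqdef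
  have hqtrans : Transitive q := by
    rintro a b c (h1 | ⟨h1, h2⟩) (h3 | ⟨h3, h4⟩)
    · exact Or.inl (htr h1 h3)
    · refine Or.inr ⟨Or.inl ?_, h4⟩
      rcases h3 with h3 | rfl
      · exact htr h1 h3
      · exact h1
    · refine Or.inr ⟨h1, Or.inl ?_⟩
      rcases h2 with h2 | rfl
      · exact htr h2 h3
      · exact h3
    · exact Or.inr ⟨h1, h4⟩
  have hqirr : Irreflexive q := by
    rintro a (h | ⟨h1, h2⟩)
    · exact hir a h
    rcases h1 with h1 | h1 <;> rcases h2 with h2 | h2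
    · exact hne (htr h2 h1)
    · exact hne (by rw [h2]; exact h1)
    · exact hne (h1 ▸ h2)
    · exact hxyne (h2.trans h1)
  have hqyx : q y x := Or.inr ⟨Or.inr rfl, Or.inr rfl⟩
  obtain ⟨sq, f, hlen, hfb, hfl, hford⟩ := aux_cover G.nodes G.lab q hqtrans hqirr
  have hcovG : Covers sq G := ⟨f, hfb.1, hfl, fun u v h => hford u v (Or.inl h)⟩
  obtain ⟨g, hginj, hgl, hge⟩ := (heq sq).mp hcovG
  have hgbij : Function.Bijective g := by
    refine (Fintype.bijective_iff_injective_and_card g).mpr ⟨hginj, ?_⟩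
    rw [Fintype.card_coe, Fintype.card_fin, hlen, hn]
  set g' : {v // v ∈ G.nodes} → Fin sq.length :=
    (fun v => g ⟨v.1, by rw [← hn]; exact v.2⟩) with hg'def
  have hg'bij : Function.Bijective g' := by
    constructor
    · intro u v h
      have h2 := hgbij.1 h
      have h3 : u.1 = v.1 := by injection h2
      exact Subtype.ext h3
    · intro i
      obtain ⟨w, hw⟩ := hgbij.2 i
      refine ⟨⟨w.1, by rw [hn]; exact w.2⟩, ?_⟩
      rw [hg'def]
      convert hw using 2
  have hg'l : ∀ v, sq.get (g' v) = G.lab v.1 := by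
    intro v
    rw [hg'def, hgl ⟨v.1, _⟩, ← hl v.1 v.2]
  have hfm : ∀ u v : {v // v ∈ G.nodes}, u.1 < v.1 → G.lab u.1 = G.lab v.1 → f u < f v := by
    intro u v hlt hlab
    rcases cG.2 u.1 u.2 v.1 v.2 hlt with h | ⟨-, h⟩
    · rw [hlab] at h; exact absurd h (lt_irrefl _)
    · exact hford u v (Or.inl h)
  have hgm : ∀ u v : {v // v ∈ G.nodes}, u.1 < v.1 → G.lab u.1 = G.lab v.1 → g' u < g' v := by
    intro u v hlt hlab
    have huH : u.1 ∈ H.nodes := by rw [← hn]; exact u.2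
    have hvH : v.1 ∈ H.nodes := by rw [← hn]; exact v.2
    have hlab' : H.lab u.1 = H.lab v.1 := by
      rw [← hl u.1 u.2, ← hl v.1 v.2]; exact hlab
    rcases cH.2 u.1 huH v.1 hvH hlt with h | ⟨-, h⟩
    · rw [hlab'] at h; exact absurd h (lt_irrefl _)
    · exact hge ⟨u.1, huH⟩ ⟨v.1, hvH⟩ h
  have huniq := aux_uniq sq G.nodes G.lab f g' hfb hg'bij hfl hg'l hfm hgm
  have h1 : f ⟨y, hyG⟩ < f ⟨x, hxG⟩ := hford _ _ hqyx
  have h2 : g' ⟨x, hxG⟩ < g' ⟨y, hyG⟩ := hge ⟨x, _⟩ ⟨y, _⟩ hxy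
  rw [huniq ⟨y, hyG⟩, huniq ⟨x, hxG⟩] at h1
  exact lt_asymm h1 h2

end AuxProof

open Episode in
/-- For strict transitively closed (canonically indexed) episodes,
`G ∼ H` iff `G` and `H` have identical nodes and `E(G) = E(H)`. -/
theorem stmt2 {α : Type*} [LinearOrder α] (G H : Episode α)
    (hG : inS G) (hH : inS H)
    (cG : CanonicallyIndexed G) (cH : CanonicallyIndexed H) :
    Equivalent G H ↔
      (G.nodes = H.nodes ∧ (∀ v ∈ G.nodes, G.lab v = H.lab v) ∧
        ∀ x y, G.edge x y ↔ H.edge x y) := by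
  constructor
  · intro heq
    -- coverings by topological sorts
    obtain ⟨sG, fG, hlenG, hfGb, hfGl, hfGord⟩ :=
      aux_cover G.nodes G.lab G.edge (aux_edge_trans G hG) (aux_edge_irrefl G hG)
    have hcovG : Covers sG G := ⟨fG, hfGb.1, hfGl, fun u v h => hfGord u v h⟩
    obtain ⟨sH, fH, hlenH, hfHb, hfHl, hfHord⟩ :=
      aux_cover H.nodes H.lab H.edge (aux_edge_trans H hH) (aux_edge_irrefl H hH)
    have hcovH : Covers sH H := ⟨fH, hfHb.1, hfHl, fun u v h => hfHord u v h⟩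
    obtain ⟨g, hginj, hgl, hge⟩ := (heq sG).mp hcovG
    obtain ⟨g2, hg2inj, hg2l, hg2e⟩ := (heq sH).mpr hcovH
    -- cardinalities agree
    have hle1 : H.nodes.card ≤ G.nodes.card := by
      have := Fintype.card_le_of_injective g hginj
      rwa [Fintype.card_coe, Fintype.card_fin, hlenG] at this
    have hle2 : G.nodes.card ≤ H.nodes.card := by
      have := Fintype.card_le_of_injective g2 hg2inj
      rwa [Fintype.card_coe, Fintype.card_fin, hlenH] at this
    have hcard : G.nodes.card = H.nodes.card := le_antisymm hle2 hle1
    set n := G.nodes.card with hd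
    have hnG : G.nodes = Finset.range n := cG.1
    have hnH : H.nodes = Finset.range n := by rw [cH.1, ← hcard]
    have hn : G.nodes = H.nodes := by rw [hnG, hnH]
    -- labels agree
    have hgbij : Function.Bijective g := by
      refine (Fintype.bijective_iff_injective_and_card g).mpr ⟨hginj, ?_⟩
      rw [Fintype.card_coe, Fintype.card_fin, hlenG, hcard]
    have hcountG := fun a => aux_card_lab G.nodes G.lab sG fG hfGb hfGl a
    have hcountH := fun a => aux_card_lab H.nodes H.lab sG g hgbij hgl a
    have hcount : ∀ a : α, ((Finset.range n).filter fun x => a = G.lab x).card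
        = ((Finset.range n).filter fun x => a = H.lab x).card := by
      intro a
      have h1 := hcountG a
      have h2 := hcountH a
      rw [hnG] at h1
      rw [hnH] at h2
      rw [h1, h2]
    set LG : List α := (List.range n).map G.lab with hLG
    set LH : List α := (List.range n).map H.lab with hLH
    have keycount : ∀ (lab : ℕ → α) (a : α),
        Multiset.count a (((List.range n).map lab : List α) : Multiset α)
          = ((Finset.range n).filter (fun x => a = lab x)).card := by
      intro lab a
      rw [← Multiset.map_coe, Multiset.count_map]
      rfl
    have hms : (LG : Multiset α) = (LH : Multiset α) := by
      rw [Multiset.ext]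
      intro a
      rw [hLG, hLH, keycount, keycount]
      exact hcount a
    have hperm : LG.Perm LH := Multiset.coe_eq_coe.mp hms
    have hsortG : LG.Pairwise (· ≤ ·) := by
      refine List.pairwise_map.mpr ?_
      refine List.Pairwise.imp_of_mem ?_ (List.pairwise_lt_range (n := n))
      intro a b ha hb hab
      have ha' : a ∈ G.nodes := by rw [hnG]; exact Finset.mem_range.mpr (List.mem_range.mp ha)
      have hb' : b ∈ G.nodes := by rw [hnG]; exact Finset.mem_range.mpr (List.mem_range.mp hb)
      rcases cG.2 a ha' b hb' hab with h | ⟨h, -⟩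
      · exact le_of_lt h
      · exact le_of_eq h
    have hsortH : LH.Pairwise (· ≤ ·) := by
      refine List.pairwise_map.mpr ?_
      refine List.Pairwise.imp_of_mem ?_ (List.pairwise_lt_range (n := n))
      intro a b ha hb hab
      have ha' : a ∈ H.nodes := by rw [hnH]; exact Finset.mem_range.mpr (List.mem_range.mp ha)
      have hb' : b ∈ H.nodes := by rw [hnH]; exact Finset.mem_range.mpr (List.mem_range.mp hb)
      rcases cH.2 a ha' b hb' hab with h | ⟨h, -⟩
      · exact le_of_lt h
      · exact le_of_eq h
    have hLGLH : LG = LH := List.Perm.eq_of_pairwise' hsortG hsortH hperm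
    have hlab : ∀ v ∈ G.nodes, G.lab v = H.lab v := by
      intro v hv
      have hvn : v < n := Finset.mem_range.mp (by rw [← hnG]; exact hv)
      have o1 : LG[v]? = some (G.lab v) := by simp [hLG, hvn]
      have o2 : LH[v]? = some (H.lab v) := by simp [hLH, hvn]
      rw [hLGLH, o2] at o1
      exact (Option.some_injective _ o1).symm
    refine ⟨hn, hlab, fun x y => ⟨fun h => ?_, fun h => ?_⟩⟩
    · exact aux_edge_sub H G hH hG cH cG (fun s => (heq s).symm) hn.symm
        (fun v hv => (hlab v (by rw [hn]; exact hv)).symm) x y h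
    · exact aux_edge_sub G H hG hH cG cH heq hn hlab x y h
  · rintro ⟨hn, hlab, he⟩ s
    constructor
    · rintro ⟨f, hinj, hl, hedge⟩
      refine ⟨fun v => f ⟨v.1, by rw [hn]; exact v.2⟩, ?_, ?_, ?_⟩
      · intro u v h
        have h2 := hinj h
        have h3 : u.1 = v.1 := by injection h2
        exact Subtype.ext h3
      · intro v
        rw [hl ⟨v.1, _⟩]
        exact hlab v.1 (by rw [hn]; exact v.2)
      · intro u v h
        exact hedge _ _ ((he _ _).mpr h)
    · rintro ⟨f, hinj, hl, hedge⟩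
      refine ⟨fun v => f ⟨v.1, by rw [← hn]; exact v.2⟩, ?_, ?_, ?_⟩
      · intro u v h
        have h2 := hinj h
        have h3 : u.1 = v.1 := by injection h2
        exact Subtype.ext h3
      · intro v
        rw [hl ⟨v.1, _⟩]
        exact (hlab v.1 v.2).symm
      · intro u v h
        exact hedge _ _ ((he _ _).mp h)
end

section
/- Fix a sequence s and a window size ρ, and consider strict, transitively closed episodes that occur in s within some window of length at most ρ. The node closure cl_N is an idempotent and monotonic extension operator: (1) G ⪯ cl_N(G); (2) cl_N(cl_N(G)) = cl_N(G); (3) if G ⪯ H then cl_N(G) ⪯ cl_N(H). -/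
open scoped Classical

namespace Episode

variable {α : Type*}

namespace StmtAux
open Episode
set_option linter.unusedSectionVars false
variable {α : Type*} [LinearOrder α]

noncomputable def labsList (s : List α) (ρ : ℕ) (G : Episode α) : List α :=
  (s.toFinset.filter
      (fun x => (∀ f, IsOcc s ρ G f → SymInWindow s f x) ∧
        ∀ v ∈ G.nodes, G.lab v ≠ x)).sort (· ≤ ·)

def base (G : Episode α) : ℕ := G.nodes.sup id + 1

lemma clN_nodes (s : List α) (ρ : ℕ) (G : Episode α) :
    (clN s ρ G).nodes =
      G.nodes ∪ (Finset.range (labsList s ρ G).length).image (fun i => base G + i) := rfl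

lemma clN_edge (s : List α) (ρ : ℕ) (G : Episode α) : (clN s ρ G).edge = G.edge := rfl

lemma clN_lab (s : List α) (ρ : ℕ) (G : Episode α) (v : ℕ) :
    (clN s ρ G).lab v =
      if h : base G ≤ v ∧ v - base G < (labsList s ρ G).length ∧ v ∉ G.nodes
      then (labsList s ρ G).get ⟨v - base G, h.2.1⟩ else G.lab v := rfl

lemma not_mem_of_base_le {G : Episode α} {v : ℕ} (h : base G ≤ v) : v ∉ G.nodes := by
  intro hv
  have := Finset.le_sup (f := id) hv
  simp only [id] at this
  unfold base at h; omega

lemma clN_lab_mem (s : List α) (ρ : ℕ) (G : Episode α) {v : ℕ} (hv : v ∈ G.nodes) :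
    (clN s ρ G).lab v = G.lab v := by
  rw [clN_lab, dif_neg]; tauto

lemma clN_lab_new (s : List α) (ρ : ℕ) (G : Episode α) {j : ℕ}
    (hj : j < (labsList s ρ G).length) :
    (clN s ρ G).lab (base G + j) = (labsList s ρ G).get ⟨j, hj⟩ := by
  have h1 : base G + j - base G = j := by omega
  rw [clN_lab, dif_pos]
  · simp [h1]
  · refine ⟨Nat.le_add_right _ _, by omega, not_mem_of_base_le (Nat.le_add_right _ _)⟩

lemma mem_labsList {s : List α} {ρ : ℕ} {G : Episode α} {x : α} :
    x ∈ labsList s ρ G ↔ x ∈ s.toFinset ∧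
      (∀ f, IsOcc s ρ G f → SymInWindow s f x) ∧ ∀ v ∈ G.nodes, G.lab v ≠ x := by
  unfold labsList
  rw [Finset.mem_sort, Finset.mem_filter]

lemma labsList_nodup (s : List α) (ρ : ℕ) (G : Episode α) : (labsList s ρ G).Nodup :=
  Finset.sort_nodup _ _

lemma sub_lt_of_mem {s : List α} {ρ : ℕ} {G : Episode α} {v : ℕ}
    (hv : v ∈ (clN s ρ G).nodes) (h : v ∉ G.nodes) :
    base G ≤ v ∧ v - base G < (labsList s ρ G).length := by
  rw [clN_nodes, Finset.mem_union] at hv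
  rcases hv with hv | hv
  · exact absurd hv h
  · simp only [Finset.mem_image, Finset.mem_range] at hv
    obtain ⟨i, hi, rfl⟩ := hv
    constructor <;> omega

lemma G_subset_clN (s : List α) (ρ : ℕ) (G : Episode α) : G.nodes ⊆ (clN s ρ G).nodes := by
  rw [clN_nodes]; exact Finset.subset_union_left

lemma exists_extend_occ (s : List α) (ρ : ℕ) (G : Episode α)
    {f : {v // v ∈ G.nodes} → Fin s.length} (hf : IsOcc s ρ G f) :
    ∃ f' : {v // v ∈ (clN s ρ G).nodes} → Fin s.length,
      IsOcc s ρ (clN s ρ G) f' ∧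
      (∀ (v : ℕ) (hv : v ∈ G.nodes), f' ⟨v, G_subset_clN s ρ G hv⟩ = f ⟨v, hv⟩) ∧
      (∀ w, ∃ u v, f u ≤ f' w ∧ f' w ≤ f v) := by
  classical
  set L := labsList s ρ G with hL
  have hprop : ∀ j : Fin L.length, SymInWindow s f (L.get j) ∧
      ∀ v ∈ G.nodes, G.lab v ≠ L.get j := by
    intro j
    have hmem : L.get j ∈ L := List.get_mem L j
    rw [mem_labsList] at hmem
    exact ⟨hmem.2.1 f hf, hmem.2.2⟩
  choose pos hposlab hposlo hposhi using fun j => (hprop j).1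
  have hnewmem : ∀ (v : {v // v ∈ (clN s ρ G).nodes}), v.1 ∉ G.nodes →
      base G ≤ v.1 ∧ v.1 - base G < L.length := fun v h => sub_lt_of_mem v.2 h
  let F : {v // v ∈ (clN s ρ G).nodes} → Fin s.length := fun v =>
    if h : v.1 ∈ G.nodes then f ⟨v.1, h⟩ else pos ⟨v.1 - base G, (hnewmem v h).2⟩
  have hFpos : ∀ (v : {v // v ∈ (clN s ρ G).nodes}) (h : v.1 ∈ G.nodes),
      F v = f ⟨v.1, h⟩ := fun v h => dif_pos h
  have hFneg : ∀ (v : {v // v ∈ (clN s ρ G).nodes}) (h : v.1 ∉ G.nodes),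
      F v = pos ⟨v.1 - base G, (hnewmem v h).2⟩ := fun v h => dif_neg h
  have hbound : ∀ w, ∃ u v, f u ≤ F w ∧ F w ≤ f v := by
    intro w
    by_cases h : w.1 ∈ G.nodes
    · exact ⟨⟨w.1, h⟩, ⟨w.1, h⟩, le_of_eq (hFpos w h).symm, le_of_eq (hFpos w h)⟩
    · obtain ⟨u, hu⟩ := hposlo ⟨w.1 - base G, (hnewmem w h).2⟩
      obtain ⟨v, hv⟩ := hposhi ⟨w.1 - base G, (hnewmem w h).2⟩
      exact ⟨u, v, (hFneg w h) ▸ hu, (hFneg w h) ▸ hv⟩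
  have hlabs : ∀ (v : {v // v ∈ (clN s ρ G).nodes}),
      s.get (F v) = (clN s ρ G).lab v.1 := by
    intro v
    by_cases h : v.1 ∈ G.nodes
    · rw [hFpos v h, clN_lab_mem s ρ G h]; exact hf.2.1 _
    · rw [hFneg v h, hposlab, clN_lab, dif_pos ⟨(hnewmem v h).1, (hnewmem v h).2, h⟩]
  refine ⟨F, ⟨?_, hlabs, ?_, ?_⟩, ?_, hbound⟩
  · -- injective
    intro v w hvw
    have heq : (clN s ρ G).lab v.1 = (clN s ρ G).lab w.1 := by
      rw [← hlabs v, ← hlabs w, hvw]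
    by_cases hv : v.1 ∈ G.nodes <;> by_cases hw : w.1 ∈ G.nodes
    · rw [hFpos v hv, hFpos w hw] at hvw
      have := congrArg Subtype.val (hf.1 hvw)
      exact Subtype.ext this
    · exfalso
      rw [clN_lab_mem s ρ G hv, clN_lab,
        dif_pos ⟨(hnewmem w hw).1, (hnewmem w hw).2, hw⟩] at heq
      exact (hprop ⟨w.1 - base G, (hnewmem w hw).2⟩).2 v.1 hv heq
    · exfalso
      rw [clN_lab_mem s ρ G hw, clN_lab,
        dif_pos ⟨(hnewmem v hv).1, (hnewmem v hv).2, hv⟩] at heq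
      exact (hprop ⟨v.1 - base G, (hnewmem v hv).2⟩).2 w.1 hw heq.symm
    · rw [hFneg v hv, hFneg w hw] at hvw
      have hlq : L.get ⟨v.1 - base G, (hnewmem v hv).2⟩
          = L.get ⟨w.1 - base G, (hnewmem w hw).2⟩ := by
        rw [← hposlab, ← hposlab, hvw]
      have hij := (List.Nodup.get_inj_iff (labsList_nodup s ρ G)).1 hlq
      have h1 := (hnewmem v hv).1
      have h2 := (hnewmem w hw).1
      have h3 : v.1 - base G = w.1 - base G := congrArg Fin.val hij
      exact Subtype.ext (by omega)
  · -- edges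
    intro u v he
    rw [clN_edge] at he
    have hu := (G.edge_mem he).1
    have hv := (G.edge_mem he).2
    rw [hFpos u hu, hFpos v hv]
    exact hf.2.2.1 ⟨u.1, hu⟩ ⟨v.1, hv⟩ he
  · -- window
    intro u v
    obtain ⟨a, b, hab1, hab2⟩ := hbound u
    obtain ⟨c, d, hcd1, hcd2⟩ := hbound v
    have h1 := hf.2.2.2 b c
    have h2 : (F u : ℕ) ≤ (f b : ℕ) := hab2
    have h3 : (f c : ℕ) ≤ (F v : ℕ) := hcd1
    omega
  · intro v hv; exact hFpos _ hv

lemma episode_ext {G H : Episode α} (hn : G.nodes = H.nodes) (he : G.edge = H.edge)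
    (hl : G.lab = H.lab) : G = H := by
  cases G; cases H
  cases hn; cases he; cases hl
  rfl

lemma subep_clN (s : List α) (ρ : ℕ) (G : Episode α) : Subep G (clN s ρ G) := by
  refine ⟨G.nodes, G_subset_clN s ρ G, rfl, ?_⟩
  rintro s' ⟨f, hinj, hlab, hedge⟩
  refine ⟨f, hinj, ?_, ?_⟩
  · intro v
    have := hlab v
    have hmem : v.1 ∈ G.nodes := v.2
    rw [this]
    exact clN_lab_mem s ρ G hmem
  · intro u v he
    exact hedge u v ⟨u.2, v.2, he⟩

lemma labsList_clN_nil (s : List α) (ρ : ℕ) (G : Episode α) (hocc : Occurs s ρ G) :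
    labsList s ρ (clN s ρ G) = [] := by
  rw [List.eq_nil_iff_forall_not_mem]
  intro x hx
  rw [mem_labsList] at hx
  obtain ⟨hxs, h1, h2⟩ := hx
  -- x is in the filter for G
  have hxG : x ∈ labsList s ρ G := by
    rw [mem_labsList]
    refine ⟨hxs, ?_, ?_⟩
    · intro g hg
      obtain ⟨g', hg', -, hbd⟩ := exists_extend_occ s ρ G hg
      obtain ⟨i, hix, ⟨u', hu'⟩, ⟨v', hv'⟩⟩ := h1 g' hg'
      obtain ⟨a, -, ha, -⟩ := hbd u'
      obtain ⟨-, b, -, hb⟩ := hbd v'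
      exact ⟨i, hix, ⟨a, le_trans ha hu'⟩, ⟨b, le_trans hv' hb⟩⟩
    · intro v hv
      have := h2 v (G_subset_clN s ρ G hv)
      rwa [clN_lab_mem s ρ G hv] at this
  obtain ⟨j, hget⟩ := List.mem_iff_get.1 hxG
  have hnode : base G + j.1 ∈ (clN s ρ G).nodes := by
    rw [clN_nodes]
    exact Finset.mem_union_right _
      (Finset.mem_image.2 ⟨j.1, Finset.mem_range.2 j.2, rfl⟩)
  have := h2 _ hnode
  rw [clN_lab_new s ρ G j.2] at this
  exact this (by cases j; exact hget)

lemma clN_idem (s : List α) (ρ : ℕ) (G : Episode α) (hocc : Occurs s ρ G) :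
    clN s ρ (clN s ρ G) = clN s ρ G := by
  have hnil := labsList_clN_nil s ρ G hocc
  apply episode_ext
  · rw [clN_nodes s ρ (clN s ρ G), hnil]
    simp
  · rw [clN_edge]
  · funext v
    rw [clN_lab s ρ (clN s ρ G), dif_neg]
    rw [hnil]
    simp

lemma exists_min_node {r : ℕ → ℕ → Prop} (htrans : ∀ {a b c}, r a b → r b c → r a c)
    (hirr : ∀ v, ¬ r v v) (U : Finset ℕ) (hU : U.Nonempty) :
    ∃ m ∈ U, ∀ y ∈ U, ¬ r y m := by
  classical
  induction U using Finset.strongInductionOn with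
  | _ U ih =>
    obtain ⟨a, ha⟩ := hU
    by_cases hmin : ∀ y ∈ U, ¬ r y a
    · exact ⟨a, ha, hmin⟩
    · push_neg at hmin
      obtain ⟨y, hy, hya⟩ := hmin
      have hyna : y ≠ a := fun h => hirr a (h ▸ hya)
      have hyE : y ∈ U.erase a := Finset.mem_erase.2 ⟨hyna, hy⟩
      obtain ⟨m, hm, hmmin⟩ := ih (U.erase a) (Finset.erase_ssubset ha) ⟨y, hyE⟩
      refine ⟨m, Finset.mem_of_mem_erase hm, ?_⟩
      intro z hz hzm
      by_cases hza : z = a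
      · subst hza
        exact hmmin y hyE (htrans hya hzm)
      · exact hmmin z (Finset.mem_erase.2 ⟨hza, hz⟩) hzm

lemma exists_topo_list {r : ℕ → ℕ → Prop} (htrans : ∀ {a b c}, r a b → r b c → r a c)
    (hirr : ∀ v, ¬ r v v) (U : Finset ℕ) :
    ∃ l : List ℕ, l.Nodup ∧ l.toFinset = U ∧
      ∀ x ∈ U, ∀ y ∈ U, r x y → l.idxOf x < l.idxOf y := by
  classical
  induction U using Finset.strongInductionOn with
  | _ U ih =>
    rcases U.eq_empty_or_nonempty with rfl | hU
    · exact ⟨[], List.nodup_nil, rfl, by simp⟩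
    · obtain ⟨m, hm, hmmin⟩ := exists_min_node (r := r) htrans hirr U hU
      obtain ⟨l', hnd, htf, hord⟩ := ih (U.erase m) (Finset.erase_ssubset hm)
      refine ⟨m :: l', ?_, ?_, ?_⟩
      · refine List.nodup_cons.2 ⟨?_, hnd⟩
        intro hml'
        have : m ∈ U.erase m := htf ▸ List.mem_toFinset.2 hml'
        exact (Finset.mem_erase.1 this).1 rfl
      · rw [List.toFinset_cons, htf, Finset.insert_erase hm]
      · intro x hx y hy hxy
        have hym : y ≠ m := fun h => hmmin x hx (h ▸ hxy)
        have hyE : y ∈ U.erase m := Finset.mem_erase.2 ⟨hym, hy⟩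
        have hyl' : y ∈ l' := List.mem_toFinset.1 (htf ▸ hyE)
        rw [List.idxOf_cons_ne _ (Ne.symm hym)]
        by_cases hxm : x = m
        · subst hxm
          rw [List.idxOf_cons_self]
          omega
        · have hxE : x ∈ U.erase m := Finset.mem_erase.2 ⟨hxm, hx⟩
          rw [List.idxOf_cons_ne _ (Ne.symm hxm)]
          have := hord x hxE y hyE hxy
          omega

lemma label_mem_of_subep (G H : Episode α) (hHa : H.Acyclic) (hHt : H.TransClosed)
    (U₀ : Finset ℕ) (hsub : U₀ ⊆ H.nodes) (hcard : U₀.card = G.nodes.card)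
    (hcov : ∀ s', Covers s' (H.restrict U₀) → Covers s' G) :
    ∀ w ∈ U₀, ∃ v ∈ G.nodes, G.lab v = H.lab w := by
  classical
  have htrans : ∀ {a b c}, H.edge a b → H.edge b c → H.edge a c := fun hab hbc =>
    hHt ((Relation.TransGen.single hab).trans (Relation.TransGen.single hbc))
  have hirr : ∀ v, ¬ H.edge v v := fun v h => hHa v (Relation.TransGen.single h)
  obtain ⟨l, hnd, htf, hord⟩ := exists_topo_list (r := H.edge) htrans hirr U₀
  have hmeml : ∀ v ∈ U₀, v ∈ l := fun v hv => List.mem_toFinset.1 (htf ▸ hv)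
  have hlen : (l.map H.lab).length = U₀.card := by
    rw [List.length_map, ← htf, List.toFinset_card_of_nodup hnd]
  have hidx : ∀ v ∈ U₀, l.idxOf v < (l.map H.lab).length := by
    intro v hv
    rw [List.length_map]
    exact List.idxOf_lt_length_iff.2 (hmeml v hv)
  have hgetmap : ∀ (v : ℕ) (hv : v ∈ U₀) (h : l.idxOf v < (l.map H.lab).length),
      (l.map H.lab).get ⟨l.idxOf v, h⟩ = H.lab v := by
    intro v hv h
    rw [List.get_eq_getElem, List.getElem_map,
      List.getElem_idxOf (List.idxOf_lt_length_iff.2 (hmeml v hv))]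
  have hcovr : Covers (l.map H.lab) (H.restrict U₀) := by
    refine ⟨fun v => ⟨l.idxOf v.1, hidx v.1 v.2⟩, ?_, ?_, ?_⟩
    · intro v w hvw
      have h1 : l.idxOf v.1 = l.idxOf w.1 := congrArg Fin.val hvw
      exact Subtype.ext ((List.idxOf_inj (hmeml v.1 v.2)).1 h1)
    · intro v
      exact hgetmap v.1 v.2 _
    · rintro u v ⟨hu, hv, he⟩
      exact Fin.mk_lt_mk.2 (hord u.1 hu v.1 hv he)
  obtain ⟨g, hginj, hglab, -⟩ := hcov (l.map H.lab) hcovr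
  have hbij : Function.Bijective g := by
    rw [Fintype.bijective_iff_injective_and_card]
    refine ⟨hginj, ?_⟩
    rw [Fintype.card_coe, Fintype.card_fin, hlen, hcard]
  intro w hw
  obtain ⟨v, hv⟩ := hbij.2 ⟨l.idxOf w, hidx w hw⟩
  refine ⟨v.1, v.2, ?_⟩
  have h2 := hglab v
  rw [hv, hgetmap w hw _] at h2
  exact h2.symm

lemma window_index_lt {s : List α} {a b i : ℕ} (hi : i < (window s a b).length) :
    a + i < s.length ∧ a + i ≤ b := by
  simp only [window, List.length_drop, List.length_take] at hi
  omega

lemma window_get (s : List α) {a b i : ℕ} (hi : i < (window s a b).length)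
    (h2 : a + i < s.length) :
    (window s a b).get ⟨i, hi⟩ = s.get ⟨a + i, h2⟩ := by
  simp only [window, List.get_eq_getElem, List.getElem_drop, List.getElem_take]

lemma window_length_lt {s : List α} {a b : ℕ} (hab : a ≤ b) (hb : b < s.length) {i : ℕ}
    (hi : i ≤ b - a) : i < (window s a b).length := by
  simp only [window, List.length_drop, List.length_take]
  omega

lemma symInWindow_of_subep (s : List α) (ρ : ℕ) (G H : Episode α)
    (hGne : G.nodes.Nonempty)
    (U₀ : Finset ℕ) (hsub : U₀ ⊆ H.nodes) (hcard : U₀.card = G.nodes.card)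
    (hcov : ∀ s', Covers s' (H.restrict U₀) → Covers s' G)
    {x : α} (hxA : ∀ g, IsOcc s ρ G g → SymInWindow s g x) :
    ∀ f, IsOcc s ρ H f → SymInWindow s f x := by
  intro f hf
  have hHne : Nonempty {v // v ∈ H.nodes} := by
    obtain ⟨v, hv⟩ := hGne
    have hc : 0 < U₀.card := by
      rw [hcard]
      exact Finset.card_pos.2 ⟨v, hv⟩
    obtain ⟨w, hw⟩ := Finset.card_pos.1 hc
    exact ⟨⟨w, hsub hw⟩⟩
  obtain ⟨u₀, hu₀⟩ := Finite.exists_min (fun v : {v // v ∈ H.nodes} => (f v : ℕ))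
  obtain ⟨v₀, hv₀⟩ := Finite.exists_max (fun v : {v // v ∈ H.nodes} => (f v : ℕ))
  set a : ℕ := (f u₀ : ℕ) with ha
  set b : ℕ := (f v₀ : ℕ) with hb
  have hab : a ≤ b := hu₀ v₀
  have hbs : b < s.length := (f v₀).2
  have hspan : b < a + ρ := hf.2.2.2 v₀ u₀
  -- the window covers H
  have hcovH : Covers (window s a b) (H.restrict U₀) := by
    have hwf : ∀ v : {v // v ∈ H.nodes}, (f v : ℕ) - a < (window s a b).length := by
      intro v
      exact window_length_lt hab hbs (by have h1 := hu₀ v; have h2 := hv₀ v; omega)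
    refine ⟨fun v => ⟨(f ⟨v.1, hsub v.2⟩ : ℕ) - a, hwf ⟨v.1, hsub v.2⟩⟩, ?_, ?_, ?_⟩
    · intro v w hvw
      have h1 : (f ⟨v.1, hsub v.2⟩ : ℕ) - a = (f ⟨w.1, hsub w.2⟩ : ℕ) - a :=
        congrArg Fin.val hvw
      have h2 := hu₀ ⟨v.1, hsub v.2⟩
      have h3 := hu₀ ⟨w.1, hsub w.2⟩
      have h4 : f ⟨v.1, hsub v.2⟩ = f ⟨w.1, hsub w.2⟩ := Fin.ext (by omega)
      have h6 : (⟨v.1, hsub v.2⟩ : {x // x ∈ H.nodes}) = ⟨w.1, hsub w.2⟩ := hf.1 h4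
      have h7 : (⟨v.1, hsub v.2⟩ : {x // x ∈ H.nodes}).val
          = (⟨w.1, hsub w.2⟩ : {x // x ∈ H.nodes}).val := congrArg Subtype.val h6
      exact Subtype.ext h7
    · intro v
      have h2 := hu₀ ⟨v.1, hsub v.2⟩
      have h5 : a + ((f ⟨v.1, hsub v.2⟩ : ℕ) - a) = (f ⟨v.1, hsub v.2⟩ : ℕ) := by omega
      rw [window_get _ _ (by rw [h5]; exact (f _).2)]
      have h7 : (⟨a + ((f ⟨v.1, hsub v.2⟩ : ℕ) - a), by rw [h5]; exact (f _).2⟩ :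
          Fin s.length) = f ⟨v.1, hsub v.2⟩ := Fin.ext h5
      rw [h7]
      exact hf.2.1 ⟨v.1, hsub v.2⟩
    · rintro u v ⟨hu, hv, he⟩
      have h1 : f ⟨u.1, hsub hu⟩ < f ⟨v.1, hsub hv⟩ := hf.2.2.1 _ _ he
      have h2 := hu₀ ⟨u.1, hsub hu⟩
      exact Fin.mk_lt_mk.2 (by simp only [Fin.lt_def] at h1; omega)
  obtain ⟨g, hginj, hglab, hgedge⟩ := hcov _ hcovH
  -- convert g into an occurrence of G in s
  have hgbd : ∀ v : {v // v ∈ G.nodes}, a + (g v : ℕ) < s.length ∧ a + (g v : ℕ) ≤ b :=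
    fun v => window_index_lt (g v).2
  set gg : {v // v ∈ G.nodes} → Fin s.length :=
    fun v => ⟨a + (g v : ℕ), (hgbd v).1⟩ with hgg
  have hggocc : IsOcc s ρ G gg := by
    refine ⟨?_, ?_, ?_, ?_⟩
    · intro v w hvw
      have h1 : a + (g v : ℕ) = a + (g w : ℕ) := congrArg Fin.val hvw
      exact hginj (Fin.ext (by omega))
    · intro v
      have := hglab v
      rw [← this]
      exact (window_get s (g v).2 (hgbd v).1).symm
    · intro u v he
      have := hgedge u v he
      exact Fin.mk_lt_mk.2 (by simp only [Fin.lt_def] at this; omega)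
    · intro u v
      have h1 := (hgbd u).2
      have h2 := (hgbd v).2
      simp only [hgg]
      omega
  obtain ⟨i, hix, ⟨u, hu⟩, ⟨v, hv⟩⟩ := hxA gg hggocc
  refine ⟨i, hix, ⟨u₀, ?_⟩, ⟨v₀, ?_⟩⟩
  · have : (gg u : ℕ) ≤ i := hu
    simp only [hgg] at this
    exact Fin.le_def.2 (by omega)
  · have : (i : ℕ) ≤ (gg v : ℕ) := hv
    have h2 := (hgbd v).2
    simp only [hgg] at this
    exact Fin.le_def.2 (by omega)

lemma clN_card (s : List α) (ρ : ℕ) (G : Episode α) :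
    (clN s ρ G).nodes.card = G.nodes.card + (labsList s ρ G).length := by
  rw [clN_nodes, Finset.card_union_of_disjoint, Finset.card_image_of_injective _
    (fun a b h => by omega), Finset.card_range]
  rw [Finset.disjoint_right]
  intro v hv
  simp only [Finset.mem_image, Finset.mem_range] at hv
  obtain ⟨i, -, rfl⟩ := hv
  exact not_mem_of_base_le (Nat.le_add_right _ _)

lemma clN_mono (s : List α) (ρ : ℕ) (G H : Episode α) (hH : inS H)
    (hGocc : Occurs s ρ G) (hGH : Subep G H) : Subep (clN s ρ G) (clN s ρ H) := by
  classical
  obtain ⟨U₀, hU₀sub, hU₀card, hU₀cov⟩ := hGH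
  set LG := labsList s ρ G with hLG
  have hxj : ∀ j : Fin LG.length, LG.get j ∈ s.toFinset ∧
      (∀ g, IsOcc s ρ G g → SymInWindow s g (LG.get j)) ∧
      ∀ v ∈ G.nodes, G.lab v ≠ LG.get j := by
    intro j
    have hj : LG.get j ∈ LG := by cases j; exact List.get_mem LG _
    exact mem_labsList.1 hj
  have key : ∀ j : Fin LG.length, ∃ w, w ∈ (clN s ρ H).nodes ∧ w ∉ U₀ ∧
      (clN s ρ H).lab w = LG.get j := by
    intro j
    by_cases hw : ∃ w ∈ H.nodes, H.lab w = LG.get j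
    · obtain ⟨w, hwH, hwlab⟩ := hw
      refine ⟨w, G_subset_clN s ρ H hwH, ?_, by rw [clN_lab_mem s ρ H hwH]; exact hwlab⟩
      intro hwU₀
      obtain ⟨v, hv, hvlab⟩ := label_mem_of_subep G H hH.1 hH.2.1 U₀ hU₀sub hU₀card
        hU₀cov w hwU₀
      exact (hxj j).2.2 v hv (by rw [hvlab, hwlab])
    · push_neg at hw
      have hGne : G.nodes.Nonempty := by
        obtain ⟨g0, hg0⟩ := hGocc
        obtain ⟨i, -, ⟨u, -⟩, -⟩ := (hxj j).2.1 g0 hg0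
        exact ⟨u.1, u.2⟩
      have hmemH : LG.get j ∈ labsList s ρ H := by
        rw [mem_labsList]
        exact ⟨(hxj j).1,
          symInWindow_of_subep s ρ G H hGne U₀ hU₀sub hU₀card hU₀cov (hxj j).2.1,
          fun v hv => hw v hv⟩
      obtain ⟨k, hk⟩ := List.mem_iff_get.1 hmemH
      refine ⟨base H + k.1, ?_, ?_, ?_⟩
      · rw [clN_nodes]
        exact Finset.mem_union_right _
          (Finset.mem_image.2 ⟨k.1, Finset.mem_range.2 k.2, rfl⟩)
      · intro hmem
        exact not_mem_of_base_le (Nat.le_add_right _ _) (hU₀sub hmem)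
      · rw [clN_lab_new s ρ H k.2]
        cases k; exact hk
  choose nodeF hmemF hnotU₀ hlabF using key
  have hFinj : Function.Injective nodeF := by
    intro j j' hjj'
    have h1 : LG.get j = LG.get j' := by rw [← hlabF j, ← hlabF j', hjj']
    exact (List.Nodup.get_inj_iff (hLG ▸ labsList_nodup s ρ G)).1 h1
  set U : Finset ℕ := U₀ ∪ Finset.image nodeF Finset.univ with hU
  have hUsub : U ⊆ (clN s ρ H).nodes := by
    intro v hv
    rw [hU, Finset.mem_union] at hv
    rcases hv with hv | hv
    · exact G_subset_clN s ρ H (hU₀sub hv)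
    · obtain ⟨j, -, rfl⟩ := Finset.mem_image.1 hv
      exact hmemF j
  have hnodeFU : ∀ j, nodeF j ∈ U := fun j =>
    Finset.mem_union_right _ (Finset.mem_image_of_mem _ (Finset.mem_univ j))
  have hUcard : U.card = (clN s ρ G).nodes.card := by
    rw [hU, Finset.card_union_of_disjoint, Finset.card_image_of_injective _ hFinj,
      Finset.card_univ, Fintype.card_fin, clN_card, hU₀card]
    rw [Finset.disjoint_right]
    intro v hv
    obtain ⟨j, -, rfl⟩ := Finset.mem_image.1 hv
    exact hnotU₀ j
  refine ⟨U, hUsub, hUcard, ?_⟩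
  rintro s' ⟨f', hinj', hlab', hedge'⟩
  -- covering the restriction to U₀
  have hcovU₀ : Covers s' (H.restrict U₀) := by
    refine ⟨fun v => f' ⟨v.1, Finset.mem_union_left _ v.2⟩, ?_, ?_, ?_⟩
    · intro v w hvw
      have h1 : (⟨v.1, Finset.mem_union_left _ v.2⟩ : {x // x ∈ ((clN s ρ H).restrict U).nodes})
          = ⟨w.1, Finset.mem_union_left _ w.2⟩ := hinj' hvw
      have h2 : (⟨v.1, Finset.mem_union_left _ v.2⟩ : {x // x ∈ ((clN s ρ H).restrict U).nodes}).val
          = (⟨w.1, Finset.mem_union_left _ w.2⟩ : {x // x ∈ ((clN s ρ H).restrict U).nodes}).val :=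
        congrArg Subtype.val h1
      exact Subtype.ext h2
    · intro v
      have h1 := hlab' ⟨v.1, Finset.mem_union_left _ v.2⟩
      have h2 : ((H.restrict U₀).lab v.1) = H.lab v.1 := rfl
      rw [h2, h1]
      exact clN_lab_mem s ρ H (hU₀sub v.2)
    · rintro u v ⟨hu, hv, he⟩
      exact hedge' _ _ ⟨Finset.mem_union_left _ hu, Finset.mem_union_left _ hv, he⟩
  obtain ⟨g, hginj, hglab, hgedge⟩ := hU₀cov s' hcovU₀
  have hnewmem : ∀ (v : {v // v ∈ (clN s ρ G).nodes}), v.1 ∉ G.nodes →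
      base G ≤ v.1 ∧ v.1 - base G < LG.length := fun v h => sub_lt_of_mem v.2 h
  let F : {v // v ∈ (clN s ρ G).nodes} → Fin s'.length := fun v =>
    if h : v.1 ∈ G.nodes then g ⟨v.1, h⟩
    else f' ⟨nodeF ⟨v.1 - base G, (hnewmem v h).2⟩, hnodeFU _⟩
  have hFpos : ∀ (v : {v // v ∈ (clN s ρ G).nodes}) (h : v.1 ∈ G.nodes),
      F v = g ⟨v.1, h⟩ := fun v h => dif_pos h
  have hFneg : ∀ (v : {v // v ∈ (clN s ρ G).nodes}) (h : v.1 ∉ G.nodes),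
      F v = f' ⟨nodeF ⟨v.1 - base G, (hnewmem v h).2⟩, hnodeFU _⟩ :=
    fun v h => dif_neg h
  have hlabs : ∀ (v : {v // v ∈ (clN s ρ G).nodes}),
      s'.get (F v) = (clN s ρ G).lab v.1 := by
    intro v
    by_cases h : v.1 ∈ G.nodes
    · rw [hFpos v h, clN_lab_mem s ρ G h]
      exact hglab _
    · rw [hFneg v h, clN_lab, dif_pos ⟨(hnewmem v h).1, (hnewmem v h).2, h⟩]
      have h1 := hlab' ⟨nodeF ⟨v.1 - base G, (hnewmem v h).2⟩, hnodeFU _⟩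
      have h2 : ((clN s ρ H).restrict U).lab (nodeF ⟨v.1 - base G, (hnewmem v h).2⟩)
          = (clN s ρ H).lab (nodeF ⟨v.1 - base G, (hnewmem v h).2⟩) := rfl
      rw [h1, h2, hlabF]
  refine ⟨F, ?_, hlabs, ?_⟩
  · intro v w hvw
    have heq : (clN s ρ G).lab v.1 = (clN s ρ G).lab w.1 := by
      rw [← hlabs v, ← hlabs w, hvw]
    by_cases hv : v.1 ∈ G.nodes <;> by_cases hw : w.1 ∈ G.nodes
    · rw [hFpos v hv, hFpos w hw] at hvw
      have h6 : (⟨v.1, hv⟩ : {x // x ∈ G.nodes}) = ⟨w.1, hw⟩ := hginj hvw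
      have h7 : (⟨v.1, hv⟩ : {x // x ∈ G.nodes}).val
          = (⟨w.1, hw⟩ : {x // x ∈ G.nodes}).val := congrArg Subtype.val h6
      exact Subtype.ext h7
    · exfalso
      rw [clN_lab_mem s ρ G hv, clN_lab,
        dif_pos ⟨(hnewmem w hw).1, (hnewmem w hw).2, hw⟩] at heq
      exact (hxj ⟨w.1 - base G, (hnewmem w hw).2⟩).2.2 v.1 hv heq
    · exfalso
      rw [clN_lab_mem s ρ G hw, clN_lab,
        dif_pos ⟨(hnewmem v hv).1, (hnewmem v hv).2, hv⟩] at heq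
      exact (hxj ⟨v.1 - base G, (hnewmem v hv).2⟩).2.2 w.1 hw heq.symm
    · rw [hFneg v hv, hFneg w hw] at hvw
      have h6 := hinj' hvw
      have h7 := congrArg Subtype.val h6
      have h8 := hFinj h7
      have h9 : v.1 - base G = w.1 - base G := congrArg Fin.val h8
      have h1 := (hnewmem v hv).1
      have h2 := (hnewmem w hw).1
      exact Subtype.ext (by omega)
  · intro u v he
    rw [clN_edge] at he
    have hu := (G.edge_mem he).1
    have hv := (G.edge_mem he).2
    rw [hFpos u hu, hFpos v hv]
    exact hgedge ⟨u.1, hu⟩ ⟨v.1, hv⟩ he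

end StmtAux

end Episode
open Episode in
/-- The node closure `cl_N` is an idempotent and monotonic extension operator
on strict transitively closed episodes occurring in `s` within a window of
length at most `ρ`. -/
theorem stmt3 {α : Type*} [LinearOrder α] (s : List α) (ρ : ℕ)
    (G H : Episode α) (hG : inS G) (hH : inS H)
    (hGocc : Occurs s ρ G) (hHocc : Occurs s ρ H) :
    Subep G (clN s ρ G) ∧
    clN s ρ (clN s ρ G) = clN s ρ G ∧
    (Subep G H → Subep (clN s ρ G) (clN s ρ H)) :=
  ⟨StmtAux.subep_clN s ρ G, StmtAux.clN_idem s ρ G hGocc,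
    fun h => StmtAux.clN_mono s ρ G H hH hGocc h⟩
end

section
/- Fix a sequence s and a window size ρ, and consider strict, transitively closed episodes that occur in s within some window of length at most ρ. The edge closure cl_E is an idempotent and monotonic extension operator: (1) G ⪯ cl_E(G); (2) cl_E(cl_E(G)) = cl_E(G); (3) if G ⪯ H then cl_E(G) ⪯ cl_E(H). -/
open scoped Classical

open Episode in
private lemma Episode.ext' {α : Type*} {G H : Episode α} (h1 : G.nodes = H.nodes)
    (h2 : G.edge = H.edge) (h3 : G.lab = H.lab) : G = H := by
  cases G; cases H
  simp only at h1 h2 h3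
  subst h1; subst h2; subst h3
  rfl

/-- A strictly "label-class monotone" bijection between two finite labelled
linearly-keyed types is unique. -/
private lemma uniq_mono_bij {α β γ : Type*} [Fintype β] [Fintype γ]
    (lb : β → α) (lc : γ → α) (p : β → ℕ) (q : γ → ℕ)
    (hp : Function.Injective p) (hq : Function.Injective q)
    (μ₁ μ₂ : β → γ) (h₁ : Function.Bijective μ₁) (h₂ : Function.Bijective μ₂)
    (hl₁ : ∀ a, lc (μ₁ a) = lb a) (hl₂ : ∀ a, lc (μ₂ a) = lb a)
    (hm₁ : ∀ a b, lb a = lb b → p a < p b → q (μ₁ a) < q (μ₁ b))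
    (hm₂ : ∀ a b, lb a = lb b → p a < p b → q (μ₂ a) < q (μ₂ b)) :
    ∀ a, μ₁ a = μ₂ a := by
  classical
  intro a
  set S : γ → Finset γ := fun z => Finset.univ.filter (fun c => lc c = lb a ∧ q c < q z)
    with hS
  have key : ∀ (μ : β → γ), Function.Bijective μ → (∀ x, lc (μ x) = lb x) →
      (∀ x y, lb x = lb y → p x < p y → q (μ x) < q (μ y)) →
      (S (μ a)).card =
        (Finset.univ.filter (fun b => lb b = lb a ∧ p b < p a)).card := by
    intro μ hbij hlab hmono
    refine (Finset.card_bij (fun b _ => μ b) ?_ ?_ ?_).symm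
    · intro b hb
      simp only [hS, Finset.mem_filter, Finset.mem_univ, true_and] at hb ⊢
      exact ⟨by rw [hlab b, hb.1], hmono b a hb.1 hb.2⟩
    · intro x hx y hy hxy
      exact hbij.1 hxy
    · intro c hc
      simp only [hS, Finset.mem_filter, Finset.mem_univ, true_and] at hc
      obtain ⟨b, rfl⟩ := hbij.2 c
      refine ⟨b, ?_, rfl⟩
      simp only [Finset.mem_filter, Finset.mem_univ, true_and]
      have hlb : lb b = lb a := by rw [← hlab b, hc.1]
      refine ⟨hlb, ?_⟩
      rcases lt_trichotomy (p b) (p a) with h | h | h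
      · exact h
      · exact absurd (congrArg (q ∘ μ) (hp h)) (by simpa using hc.2.ne)
      · exact absurd (hmono a b hlb.symm h) (by omega)
  have hcards : (S (μ₁ a)).card = (S (μ₂ a)).card := by
    rw [key μ₁ h₁ hl₁ hm₁, key μ₂ h₂ hl₂ hm₂]
  by_contra hne
  have hqne : q (μ₁ a) ≠ q (μ₂ a) := fun h => hne (hq h)
  have main : ∀ x y : γ, lc x = lb a → lc y = lb a → (S x).card = (S y).card →
      q x < q y → False := by
    intro x y hx hy hcard hlt
    have hss : S x ⊂ S y := by
      constructor
      · intro c hc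
        simp only [hS, Finset.mem_filter, Finset.mem_univ, true_and] at hc ⊢
        exact ⟨hc.1, hc.2.trans hlt⟩
      · intro hsub
        have hxy : x ∈ S y := by
          simp only [hS, Finset.mem_filter, Finset.mem_univ, true_and]
          exact ⟨hx, hlt⟩
        have hxx : x ∈ S x := hsub hxy
        simp only [hS, Finset.mem_filter, Finset.mem_univ, true_and] at hxx
        exact lt_irrefl _ hxx.2
    exact absurd hcard (Finset.card_lt_card hss).ne
  rcases lt_trichotomy (q (μ₁ a)) (q (μ₂ a)) with h | h | h
  · exact absurd h (fun h => main _ _ (hl₁ a) (hl₂ a) hcards h)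
  · exact absurd h hqne
  · exact absurd h (fun h => main _ _ (hl₂ a) (hl₁ a) hcards.symm h)

open Episode in
/-- From any occurrence `f` of `H` and a subepisode witness `(U, P)` for
`G ⪯ H`, extract a label-preserving bijection `μ : G.nodes → U` that is
edge-monotone with respect to `f`. -/
private lemma build_mu {α : Type*} (s : List α) (ρ : ℕ) (G H : Episode α)
    (U : Finset ℕ) (hU : U ⊆ H.nodes) (hcard : U.card = G.nodes.card)
    (P : ∀ t : List α, Covers t (H.restrict U) → Covers t G)
    (f : {v // v ∈ H.nodes} → Fin s.length) (hf : IsOcc s ρ H f) :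
    ∃ μ : {v // v ∈ G.nodes} → {u // u ∈ U},
      Function.Bijective μ ∧ (∀ v, H.lab (μ v).1 = G.lab v.1) ∧
      ∀ a b : {v // v ∈ G.nodes}, G.edge a.1 b.1 →
        f ⟨(μ a).1, hU (μ a).2⟩ < f ⟨(μ b).1, hU (μ b).2⟩ := by
  classical
  set n := U.card with hn
  set k : {u // u ∈ U} → ℕ := fun u => (f ⟨u.1, hU u.2⟩ : ℕ) with hk
  have hkinj : Function.Injective k := by
    intro u v h
    have h2 : f ⟨u.1, hU u.2⟩ = f ⟨v.1, hU v.2⟩ := Fin.ext h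
    have h3 := hf.1 h2
    exact Subtype.ext (Subtype.mk_eq_mk.mp h3)
  set I : Finset ℕ := U.attach.image k with hI
  have hIcard : I.card = n := by
    rw [hI, Finset.card_image_of_injective _ hkinj, Finset.card_attach]
  set σ := I.orderIsoOfFin hIcard with hσ
  have hmemlt : ∀ x : {x // x ∈ I}, (x : ℕ) < s.length := by
    rintro ⟨x, hx⟩
    simp only [hI, Finset.mem_image] at hx
    obtain ⟨u, -, rfl⟩ := hx
    exact (f ⟨u.1, hU u.2⟩).isLt
  set w : List α := List.ofFn (fun i : Fin n => s.get ⟨(σ i).1, hmemlt (σ i)⟩) with hw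
  have hwlen : w.length = n := List.length_ofFn
  have hkmem : ∀ u : {u // u ∈ U}, k u ∈ I := fun u =>
    Finset.mem_image_of_mem k (Finset.mem_attach U u)
  set c : {u // u ∈ U} → Fin w.length :=
    fun u => Fin.cast hwlen.symm (σ.symm ⟨k u, hkmem u⟩) with hc
  have hcget : ∀ u : {u // u ∈ U}, w.get (c u) = H.lab u.1 := by
    intro u
    have h1 : w.get (c u) = s.get ⟨(σ (σ.symm ⟨k u, hkmem u⟩)).1,
        hmemlt (σ (σ.symm ⟨k u, hkmem u⟩))⟩ := by
      simp [hw, hc, List.get_ofFn]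
    rw [h1]
    have h2 : (σ (σ.symm ⟨k u, hkmem u⟩)) = ⟨k u, hkmem u⟩ :=
      σ.apply_symm_apply _
    have h3 : s.get ⟨(σ (σ.symm ⟨k u, hkmem u⟩)).1,
        hmemlt (σ (σ.symm ⟨k u, hkmem u⟩))⟩ = s.get (f ⟨u.1, hU u.2⟩) := by
      refine congrArg s.get (Fin.ext ?_)
      exact congrArg Subtype.val h2
    rw [h3]
    exact hf.2.1 _
  have hcinj : Function.Injective c := by
    intro u v h
    apply hkinj
    have h1 : σ.symm ⟨k u, hkmem u⟩ = σ.symm ⟨k v, hkmem v⟩ := by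
      have := congrArg Fin.val h
      exact Fin.ext this
    have := σ.symm.injective h1
    exact congrArg Subtype.val this
  have hclt : ∀ u v : {u // u ∈ U}, k u < k v → c u < c v := by
    intro u v h
    have : (⟨k u, hkmem u⟩ : {x // x ∈ I}) < ⟨k v, hkmem v⟩ := by
      exact Subtype.mk_lt_mk.mpr h
    have h2 := σ.symm.lt_iff_lt.mpr this
    simpa [hc, Fin.lt_def] using h2
  have hcov : Covers w (H.restrict U) := by
    refine ⟨c, hcinj, ?_, ?_⟩
    · intro v; exact hcget v
    · rintro u v ⟨-, -, huv⟩
      exact hclt u v (hf.2.2.1 ⟨u.1, hU u.2⟩ ⟨v.1, hU v.2⟩ huv)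
  obtain ⟨h, hinj, hlab, hedge⟩ := P w hcov
  have hcardG : Fintype.card {v // v ∈ G.nodes} = w.length := by
    rw [Fintype.card_coe, hwlen]
    exact hcard.symm
  have hcardU : Fintype.card {u // u ∈ U} = w.length := by
    rw [Fintype.card_coe, hwlen]
    try exact hn.symm
  have hbij : Function.Bijective h := by
    rw [Fintype.bijective_iff_injective_and_card]
    exact ⟨hinj, by simpa using hcardG⟩
  have cbij : Function.Bijective c := by
    rw [Fintype.bijective_iff_injective_and_card]
    exact ⟨hcinj, by simpa using hcardU⟩
  set ec := Equiv.ofBijective c cbij with hec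
  set μ : {v // v ∈ G.nodes} → {u // u ∈ U} := fun v => ec.symm (h v) with hμ
  have hcmu : ∀ v, c (μ v) = h v := fun v => ec.apply_symm_apply (h v)
  refine ⟨μ, ?_, ?_, ?_⟩
  · exact (Equiv.bijective ec.symm).comp hbij
  · intro v
    rw [← hlab v, ← hcmu v, hcget (μ v)]
  · intro a b hab
    have h1 : c (μ a) < c (μ b) := by rw [hcmu, hcmu]; exact hedge a b hab
    have h2 : σ.symm ⟨k (μ a), hkmem _⟩ < σ.symm ⟨k (μ b), hkmem _⟩ := by
      simpa [hc, Fin.lt_def] using h1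
    have h3 : (⟨k (μ a), hkmem _⟩ : {x // x ∈ I}) < ⟨k (μ b), hkmem _⟩ :=
      σ.symm.lt_iff_lt.mp h2
    have h4 : k (μ a) < k (μ b) := Subtype.mk_lt_mk.mp h3
    exact h4

open Episode in
/-- The edge closure `cl_E` is an idempotent and monotonic extension operator
on strict transitively closed episodes occurring in `s` within a window of
length at most `ρ`. -/
theorem stmt4 {α : Type*} (s : List α) (ρ : ℕ)
    (G H : Episode α) (hG : inS G) (hH : inS H)
    (hGocc : Occurs s ρ G) (hHocc : Occurs s ρ H) :
    Subep G (clE s ρ G) ∧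
    clE s ρ (clE s ρ G) = clE s ρ G ∧
    (Subep G H → Subep (clE s ρ G) (clE s ρ H)) := by
  obtain ⟨f0, hf0⟩ := hHocc
  obtain ⟨fG, hfG⟩ := hGocc
  have hGedge_clE : ∀ x y : ℕ, G.edge x y → (clE s ρ G).edge x y := by
    intro x y hxy
    refine ⟨(G.edge_mem hxy).1, (G.edge_mem hxy).2, ?_⟩
    intro f hf
    exact hf.2.2.1 ⟨x, _⟩ ⟨y, _⟩ hxy
  have part1 : Subep G (clE s ρ G) := by
    refine ⟨G.nodes, fun x hx => hx, rfl, ?_⟩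
    rintro t ⟨g, ginj, glab, gedge⟩
    refine ⟨g, ginj, glab, ?_⟩
    intro u v huv
    exact gedge u v ⟨u.2, v.2, hGedge_clE u.1 v.1 huv⟩
  have hOccIff : ∀ f : {v // v ∈ G.nodes} → Fin s.length,
      IsOcc s ρ (clE s ρ G) f ↔ IsOcc s ρ G f := by
    intro f
    constructor
    · rintro ⟨h1, h2, h3, h4⟩
      refine ⟨h1, h2, ?_, h4⟩
      intro u v huv
      exact h3 u v (hGedge_clE u.1 v.1 huv)
    · rintro ⟨h1, h2, h3, h4⟩
      refine ⟨h1, h2, ?_, h4⟩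
      rintro u v ⟨hx, hy, hall⟩
      have := hall f ⟨h1, h2, h3, h4⟩
      convert this using 2 <;> rfl
  have part2 : clE s ρ (clE s ρ G) = clE s ρ G := by
    refine Episode.ext' rfl ?_ rfl
    funext x y
    apply propext
    constructor
    · rintro ⟨hx, hy, hall⟩
      exact ⟨hx, hy, fun f hf => hall f ((hOccIff f).mpr hf)⟩
    · rintro ⟨hx, hy, hall⟩
      exact ⟨hx, hy, fun f hf => hall f ((hOccIff f).mp hf)⟩
  refine ⟨part1, part2, ?_⟩
  rintro ⟨U, hU, hcard, P⟩
  obtain ⟨μ0, hμ0bij, hμ0lab, hμ0mono⟩ := build_mu s ρ G H U hU hcard P f0 hf0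
  -- generic monotonicity within label classes, with respect to f0's key
  have hm_gen : ∀ (μ : {v // v ∈ G.nodes} → {u // u ∈ U})
      (f : {v // v ∈ H.nodes} → Fin s.length), IsOcc s ρ H f →
      Function.Injective μ → (∀ v, H.lab (μ v).1 = G.lab v.1) →
      (∀ a b : {v // v ∈ G.nodes}, G.edge a.1 b.1 →
        f ⟨(μ a).1, hU (μ a).2⟩ < f ⟨(μ b).1, hU (μ b).2⟩) →
      ∀ a b : {v // v ∈ G.nodes}, G.lab a.1 = G.lab b.1 →
        (fG a : ℕ) < (fG b : ℕ) →
        (f0 ⟨(μ a).1, hU (μ a).2⟩ : ℕ) < (f0 ⟨(μ b).1, hU (μ b).2⟩ : ℕ) := by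
    intro μ f hf hμinj hμlab hμmono a b hlab hplt
    have hab : a ≠ b := by rintro rfl; exact lt_irrefl _ hplt
    have hab' : a.1 ≠ b.1 := fun h => hab (Subtype.ext h)
    have hedgeab : G.edge a.1 b.1 := by
      rcases hG.2.2 a.1 a.2 b.1 b.2 hab' hlab with h | h
      · exact hG.2.1 h
      · exfalso
        have := hfG.2.2.1 b a (hG.2.1 h)
        have : (fG b : ℕ) < (fG a : ℕ) := this
        omega
    have h1 : f ⟨(μ a).1, hU (μ a).2⟩ < f ⟨(μ b).1, hU (μ b).2⟩ :=
      hμmono a b hedgeab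
    have hμab : (μ a).1 ≠ (μ b).1 := by
      intro h
      exact hab (hμinj (Subtype.ext h))
    have hHlab : H.lab (μ a).1 = H.lab (μ b).1 := by
      rw [hμlab a, hμlab b]; exact hlab
    have hedgeH : H.edge (μ a).1 (μ b).1 := by
      rcases hH.2.2 (μ a).1 (hU (μ a).2) (μ b).1 (hU (μ b).2) hμab hHlab with h | h
      · exact hH.2.1 h
      · exfalso
        have h2 := hf.2.2.1 ⟨(μ b).1, hU (μ b).2⟩ ⟨(μ a).1, hU (μ a).2⟩ (hH.2.1 h)
        have h1' : (f ⟨(μ a).1, hU (μ a).2⟩ : ℕ) < (f ⟨(μ b).1, hU (μ b).2⟩ : ℕ) := h1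
        have h2' : (f ⟨(μ b).1, hU (μ b).2⟩ : ℕ) < (f ⟨(μ a).1, hU (μ a).2⟩ : ℕ) := h2
        omega
    exact hf0.2.2.1 ⟨(μ a).1, hU (μ a).2⟩ ⟨(μ b).1, hU (μ b).2⟩ hedgeH
  have hpinj : Function.Injective (fun v : {v // v ∈ G.nodes} => (fG v : ℕ)) := by
    intro u v h
    exact hfG.1 (Fin.ext h)
  have hqinj : Function.Injective
      (fun u : {u // u ∈ U} => (f0 ⟨u.1, hU u.2⟩ : ℕ)) := by
    intro u v h
    have h2 := hf0.1 (Fin.ext h)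
    exact Subtype.ext (Subtype.mk_eq_mk.mp h2)
  -- uniqueness: any build_mu bijection agrees with μ0
  have huniq : ∀ (μ : {v // v ∈ G.nodes} → {u // u ∈ U})
      (f : {v // v ∈ H.nodes} → Fin s.length) (hf : IsOcc s ρ H f),
      Function.Bijective μ → (∀ v, H.lab (μ v).1 = G.lab v.1) →
      (∀ a b : {v // v ∈ G.nodes}, G.edge a.1 b.1 →
        f ⟨(μ a).1, hU (μ a).2⟩ < f ⟨(μ b).1, hU (μ b).2⟩) →
      ∀ a, μ a = μ0 a := by
    intro μ f hf hbij hlab hmono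
    exact uniq_mono_bij (fun v : {v // v ∈ G.nodes} => G.lab v.1)
      (fun u : {u // u ∈ U} => H.lab u.1)
      (fun v => (fG v : ℕ)) (fun u => (f0 ⟨u.1, hU u.2⟩ : ℕ))
      hpinj hqinj μ μ0 hbij hμ0bij hlab hμ0lab
      (hm_gen μ f hf hbij.1 hlab hmono)
      (hm_gen μ0 f0 hf0 hμ0bij.1 hμ0lab hμ0mono)
  refine ⟨U, hU, hcard, ?_⟩
  rintro t ⟨g, ginj, glab, gedge⟩
  refine ⟨fun v => g (μ0 v), ?_, ?_, ?_⟩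
  · intro u v h
    exact hμ0bij.1 (ginj h)
  · intro v
    have := glab (μ0 v)
    rw [this]
    exact hμ0lab v
  · rintro a b ⟨hx, hy, hall⟩
    refine gedge (μ0 a) (μ0 b) ⟨(μ0 a).2, (μ0 b).2, hU (μ0 a).2, hU (μ0 b).2, ?_⟩
    intro f hf
    obtain ⟨μf, hμfbij, hμflab, hμfmono⟩ := build_mu s ρ G H U hU hcard P f hf
    have heq : ∀ v, μf v = μ0 v := huniq μf f hf hμfbij hμflab hμfmono
    -- f ∘ μf is an occurrence of G
    have hoccG : IsOcc s ρ G (fun v => f ⟨(μf v).1, hU (μf v).2⟩) := by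
      refine ⟨?_, ?_, ?_, ?_⟩
      · intro u v h
        have h1 := hf.1 h
        exact hμfbij.1 (Subtype.ext (Subtype.mk_eq_mk.mp h1))
      · intro v
        rw [hf.2.1]
        exact hμflab v
      · intro u v h
        exact hμfmono u v h
      · intro u v
        exact hf.2.2.2 _ _
    have h5 := hall (fun v => f ⟨(μf v).1, hU (μf v).2⟩) hoccG
    have ha : (⟨a.1, hx⟩ : {v // v ∈ G.nodes}) = a := Subtype.ext rfl
    have hb : (⟨b.1, hy⟩ : {v // v ∈ G.nodes}) = b := Subtype.ext rfl
    rw [ha, hb] at h5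
    rw [← heq a, ← heq b]
    exact h5
end

section
/- Fix a sequence s and a window size ρ, and consider strict, transitively closed episodes that occur in s within some window of length at most ρ. The i-closure icl(G) = cl_E(cl_N(G)) is an idempotent and monotonic extension operator: (1) G ⪯ icl(G); (2) icl(icl(G)) = icl(G); (3) if G ⪯ H then icl(G) ⪯ icl(H). -/
open scoped Classical

namespace Episode

variable {α : Type*}

theorem ext'_s5 {G H : Episode α} (h1 : G.nodes = H.nodes) (h2 : G.edge = H.edge)
    (h3 : G.lab = H.lab) : G = H := by
  cases G; cases H
  cases h1; cases h2; cases h3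
  rfl

theorem inS.not_edge_self {K : Episode α} (h : inS K) (a : ℕ) : ¬ K.edge a a :=
  fun he => h.1 a (Relation.TransGen.single he)

theorem inS.edge_total {K : Episode α} (h : inS K) {a b : ℕ} (ha : a ∈ K.nodes)
    (hb : b ∈ K.nodes) (hne : a ≠ b) (hl : K.lab a = K.lab b) :
    K.edge a b ∨ K.edge b a := by
  rcases h.2.2 a ha b hb hne hl with ht | ht
  · exact Or.inl (h.2.1 ht)
  · exact Or.inr (h.2.1 ht)

theorem inS.edge_trans {K : Episode α} (h : inS K) {a b c : ℕ}
    (h1 : K.edge a b) (h2 : K.edge b c) : K.edge a c :=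
  h.2.1 (Relation.TransGen.head h1 (Relation.TransGen.single h2))

theorem restrict_inS {H : Episode α} (hH : inS H) (U : Finset ℕ) (hU : U ⊆ H.nodes) :
    inS (H.restrict U) := by
  have hmono : ∀ a b, Relation.TransGen (H.restrict U).edge a b →
      Relation.TransGen H.edge a b := fun a b h =>
    Relation.TransGen.mono (r := (H.restrict U).edge) (p := H.edge) (fun x y hxy => hxy.2.2) a b h
  refine ⟨fun v hv => hH.1 v (hmono _ _ hv), ?_, ?_⟩
  · intro u v h
    have hmem : u ∈ U ∧ v ∈ U := by
      induction h with
      | single h => exact ⟨h.1, h.2.1⟩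
      | tail h1 h2 ih => exact ⟨ih.1, h2.2.1⟩
    exact ⟨hmem.1, hmem.2, hH.2.1 (hmono _ _ h)⟩
  · intro u hu v hv hne hl
    rcases hH.2.2 u (hU hu) v (hU hv) hne hl with ht | ht
    · exact Or.inl (Relation.TransGen.single ⟨hu, hv, hH.2.1 ht⟩)
    · exact Or.inr (Relation.TransGen.single ⟨hv, hu, hH.2.1 ht⟩)

section aux

variable [LinearOrder α] (s : List α) (ρ : ℕ)

/-- The set of new symbols added by the node closure. -/
noncomputable def gnew (G : Episode α) : Finset α :=
  s.toFinset.filter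
      (fun x => (∀ f, IsOcc s ρ G f → SymInWindow s f x) ∧
        ∀ v ∈ G.nodes, G.lab v ≠ x)

/-- The sorted list of new symbols. -/
noncomputable def glist (G : Episode α) : List α := (gnew s ρ G).sort (· ≤ ·)

/-- The first fresh node index. -/
def gbase (G : Episode α) : ℕ := G.nodes.sup id + 1

theorem clN_nodes (G : Episode α) : (clN s ρ G).nodes
    = G.nodes ∪ (Finset.range (glist s ρ G).length).image (fun i => gbase G + i) := rfl

theorem clN_edge (G : Episode α) : (clN s ρ G).edge = G.edge := rfl

theorem clN_lab (G : Episode α) : (clN s ρ G).lab = fun v =>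
    if h : gbase G ≤ v ∧ v - gbase G < (glist s ρ G).length ∧ v ∉ G.nodes then
      (glist s ρ G).get ⟨v - gbase G, h.2.1⟩
    else G.lab v := rfl

theorem lt_gbase {G : Episode α} {v : ℕ} (h : v ∈ G.nodes) : v < gbase G :=
  Nat.lt_succ_of_le (Finset.le_sup (f := id) h)

theorem clN_lab_mem {G : Episode α} {v : ℕ} (h : v ∈ G.nodes) :
    (clN s ρ G).lab v = G.lab v := by
  rw [clN_lab]
  exact dif_neg (fun hc => hc.2.2 h)

theorem clN_lab_new {G : Episode α} {i : ℕ} (hi : i < (glist s ρ G).length) :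
    (clN s ρ G).lab (gbase G + i) = (glist s ρ G).get ⟨i, hi⟩ := by
  have hnm : gbase G + i ∉ G.nodes := fun h => by have := lt_gbase h; omega
  have hc : gbase G ≤ gbase G + i ∧
      gbase G + i - gbase G < (glist s ρ G).length ∧ gbase G + i ∉ G.nodes :=
    ⟨Nat.le_add_right _ _, by omega, hnm⟩
  rw [clN_lab]
  simp only []
  rw [dif_pos hc]
  congr 1
  exact Fin.mk_eq_mk.mpr (by omega)

theorem mem_clN_of_mem {G : Episode α} {v : ℕ} (h : v ∈ G.nodes) :
    v ∈ (clN s ρ G).nodes := by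
  rw [clN_nodes]; exact Finset.mem_union_left _ h

theorem new_mem_clN {G : Episode α} {i : ℕ} (hi : i < (glist s ρ G).length) :
    gbase G + i ∈ (clN s ρ G).nodes := by
  rw [clN_nodes]
  exact Finset.mem_union_right _ (Finset.mem_image.2 ⟨i, Finset.mem_range.2 hi, rfl⟩)

theorem new_node_form {G : Episode α} {v : ℕ} (hv : v ∈ (clN s ρ G).nodes)
    (hnv : v ∉ G.nodes) : ∃ i, ∃ hi : i < (glist s ρ G).length, v = gbase G + i := by
  rw [clN_nodes] at hv
  rcases Finset.mem_union.1 hv with h | h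
  · exact absurd h hnv
  · rcases Finset.mem_image.1 h with ⟨i, hi, rfl⟩
    exact ⟨i, Finset.mem_range.1 hi, rfl⟩

theorem gnew_spec {G : Episode α} {x : α} (hx : x ∈ gnew s ρ G) :
    x ∈ s.toFinset ∧ (∀ f, IsOcc s ρ G f → SymInWindow s f x) ∧
      ∀ v ∈ G.nodes, G.lab v ≠ x := by
  have := Finset.mem_filter.1 hx
  exact ⟨this.1, this.2.1, this.2.2⟩

theorem gnew_mem {G : Episode α} {x : α} (hxs : x ∈ s.toFinset)
    (h1 : ∀ f, IsOcc s ρ G f → SymInWindow s f x)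
    (h2 : ∀ v ∈ G.nodes, G.lab v ≠ x) : x ∈ gnew s ρ G :=
  Finset.mem_filter.2 ⟨hxs, h1, h2⟩

theorem lab_new_mem {G : Episode α} {v : ℕ} (hv : v ∈ (clN s ρ G).nodes)
    (hnv : v ∉ G.nodes) : (clN s ρ G).lab v ∈ gnew s ρ G := by
  obtain ⟨i, hi, rfl⟩ := new_node_form s ρ hv hnv
  rw [clN_lab_new s ρ hi]
  exact (Finset.mem_sort _).1 (List.get_mem _ _)

theorem lab_new_inj {G : Episode α} {v w : ℕ} (hv : v ∈ (clN s ρ G).nodes)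
    (hnv : v ∉ G.nodes) (hw : w ∈ (clN s ρ G).nodes) (hnw : w ∉ G.nodes)
    (hne : v ≠ w) : (clN s ρ G).lab v ≠ (clN s ρ G).lab w := by
  obtain ⟨i, hi, rfl⟩ := new_node_form s ρ hv hnv
  obtain ⟨j, hj, rfl⟩ := new_node_form s ρ hw hnw
  rw [clN_lab_new s ρ hi, clN_lab_new s ρ hj]
  intro h
  have hnd : (glist s ρ G).Nodup := Finset.sort_nodup _ _
  have := List.nodup_iff_injective_get.1 hnd h
  rw [Fin.mk_eq_mk] at this
  omega

theorem exists_node_of_gnew {G : Episode α} {x : α} (hx : x ∈ gnew s ρ G) :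
    ∃ n, n ∈ (clN s ρ G).nodes ∧ n ∉ G.nodes ∧ (clN s ρ G).lab n = x := by
  have hxl : x ∈ glist s ρ G := (Finset.mem_sort _).2 hx
  obtain ⟨⟨i, hi⟩, hg⟩ := List.mem_iff_get.1 hxl
  have hnm : gbase G + i ∉ G.nodes := fun h => by have := lt_gbase h; omega
  exact ⟨gbase G + i, new_mem_clN s ρ hi, hnm, by rw [clN_lab_new s ρ hi]; exact hg⟩

theorem isOcc_comp {G K : Episode α} (π : ℕ → ℕ) (hinj : Set.InjOn π G.nodes)
    (hmem : ∀ v ∈ G.nodes, π v ∈ K.nodes)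
    (hlab : ∀ v ∈ G.nodes, K.lab (π v) = G.lab v)
    (hedge : ∀ u v, G.edge u v → K.edge (π u) (π v))
    {f : {v // v ∈ K.nodes} → Fin s.length} (hf : IsOcc s ρ K f) :
    IsOcc s ρ G (fun u => f ⟨π u.1, hmem u.1 u.2⟩) := by
  obtain ⟨hfi, hfl, hfe, hfw⟩ := hf
  refine ⟨?_, ?_, ?_, ?_⟩
  · intro u v h
    have h2 := congrArg Subtype.val (hfi h)
    exact Subtype.ext (hinj u.2 v.2 h2)
  · intro v
    rw [hfl]
    exact hlab v.1 v.2
  · intro u v h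
    exact hfe _ _ (hedge _ _ h)
  · intro u v
    exact hfw _ _

theorem exists_occ_clN {G : Episode α} {f : {v // v ∈ G.nodes} → Fin s.length}
    (hf : IsOcc s ρ G f) :
    ∃ f' : {v // v ∈ (clN s ρ G).nodes} → Fin s.length,
      IsOcc s ρ (clN s ρ G) f' ∧
      ∀ u, (∃ a, f a ≤ f' u) ∧ ∃ b, f' u ≤ f b := by
  have hsym : ∀ v : {v // v ∈ (clN s ρ G).nodes}, v.1 ∉ G.nodes →
      SymInWindow s f ((clN s ρ G).lab v.1) := fun v hv =>
    (gnew_spec s ρ (lab_new_mem s ρ v.2 hv)).2.1 f hf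
  classical
  set f' : {v // v ∈ (clN s ρ G).nodes} → Fin s.length :=
    fun v => if h : v.1 ∈ G.nodes then f ⟨v.1, h⟩ else (hsym v h).choose with hf'def
  have hlab' : ∀ v, s.get (f' v) = (clN s ρ G).lab v.1 := by
    intro v
    by_cases h : v.1 ∈ G.nodes
    · rw [hf'def]; simp only [dif_pos h]
      rw [hf.2.1 ⟨v.1, h⟩, clN_lab_mem s ρ h]
    · rw [hf'def]; simp only [dif_neg h]
      exact (hsym v h).choose_spec.1
  have hbnd : ∀ u, (∃ a, f a ≤ f' u) ∧ ∃ b, f' u ≤ f b := by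
    intro u
    by_cases h : u.1 ∈ G.nodes
    · rw [hf'def]; simp only [dif_pos h]
      exact ⟨⟨⟨u.1, h⟩, le_refl _⟩, ⟨⟨u.1, h⟩, le_refl _⟩⟩
    · rw [hf'def]; simp only [dif_neg h]
      exact (hsym u h).choose_spec.2
  refine ⟨f', ⟨?_, hlab', ?_, ?_⟩, hbnd⟩
  · intro u v heq
    have hgl : (clN s ρ G).lab u.1 = (clN s ρ G).lab v.1 := by
      rw [← hlab' u, ← hlab' v, heq]
    by_cases hu : u.1 ∈ G.nodes <;> by_cases hv : v.1 ∈ G.nodes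
    · have : f ⟨u.1, hu⟩ = f ⟨v.1, hv⟩ := by
        have h1 : f' u = f ⟨u.1, hu⟩ := by rw [hf'def]; simp only [dif_pos hu]
        have h2 : f' v = f ⟨v.1, hv⟩ := by rw [hf'def]; simp only [dif_pos hv]
        rw [← h1, ← h2, heq]
      have h4 := congrArg Subtype.val (hf.1 this)
      exact Subtype.ext h4
    · exfalso
      have hx := (gnew_spec s ρ (lab_new_mem s ρ v.2 hv)).2.2 u.1 hu
      rw [clN_lab_mem s ρ hu] at hgl
      exact hx hgl
    · exfalso
      have hx := (gnew_spec s ρ (lab_new_mem s ρ u.2 hu)).2.2 v.1 hv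
      rw [clN_lab_mem s ρ hv] at hgl
      exact hx hgl.symm
    · apply Subtype.ext
      by_contra hne
      exact lab_new_inj s ρ u.2 hu v.2 hv hne hgl
  · intro u v h
    have h' : G.edge u.1 v.1 := h
    have hu : u.1 ∈ G.nodes := (G.edge_mem h').1
    have hv : v.1 ∈ G.nodes := (G.edge_mem h').2
    have h1 : f' u = f ⟨u.1, hu⟩ := by rw [hf'def]; simp only [dif_pos hu]
    have h2 : f' v = f ⟨v.1, hv⟩ := by rw [hf'def]; simp only [dif_pos hv]
    rw [h1, h2]
    exact hf.2.2.1 _ _ h'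
  · intro u v
    obtain ⟨-, b, hb⟩ := hbnd u
    obtain ⟨⟨a, ha⟩, -⟩ := hbnd v
    have h1 : (f' u : ℕ) ≤ (f b : ℕ) := hb
    have h2 : (f a : ℕ) ≤ (f' v : ℕ) := ha
    have h3 : (f b : ℕ) < (f a : ℕ) + ρ := hf.2.2.2 b a
    omega

theorem isOcc_icl_iff {G : Episode α}
    (f : {v // v ∈ (icl s ρ G).nodes} → Fin s.length) :
    IsOcc s ρ (icl s ρ G) f ↔ IsOcc s ρ (clN s ρ G) f := by
  constructor
  · rintro ⟨h1, h2, h3, h4⟩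
    refine ⟨h1, h2, ?_, h4⟩
    intro u v h
    refine h3 u v ?_
    exact ⟨u.2, v.2, fun g hg => hg.2.2.1 ⟨u.1, u.2⟩ ⟨v.1, v.2⟩ h⟩
  · rintro ⟨h1, h2, h3, h4⟩
    refine ⟨h1, h2, ?_, h4⟩
    rintro u v ⟨hx, hy, hall⟩
    have := hall f ⟨h1, h2, h3, h4⟩
    have e1 : (⟨u.1, hx⟩ : {v // v ∈ (icl s ρ G).nodes}) = u := Subtype.ext rfl
    have e2 : (⟨v.1, hy⟩ : {v // v ∈ (icl s ρ G).nodes}) = v := Subtype.ext rfl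
    exact this

theorem gnew_icl_empty (G : Episode α) : gnew s ρ (icl s ρ G) = ∅ := by
  ext x
  simp only [Finset.notMem_empty, iff_false]
  intro hx
  obtain ⟨hxs, hwin, hnl⟩ := gnew_spec s ρ hx
  have hxG : x ∈ gnew s ρ G := by
    refine gnew_mem s ρ hxs ?_ ?_
    · intro f hf
      obtain ⟨f', hf', hbnd⟩ := exists_occ_clN s ρ hf
      have hf'i : IsOcc s ρ (icl s ρ G) f' := (isOcc_icl_iff s ρ f').2 hf'
      obtain ⟨i, hi1, ⟨u, hu⟩, ⟨v, hv⟩⟩ := hwin f' hf'i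
      obtain ⟨⟨a, ha⟩, -⟩ := hbnd u
      obtain ⟨-, ⟨b, hb⟩⟩ := hbnd v
      exact ⟨i, hi1, ⟨a, le_trans ha hu⟩, ⟨b, le_trans hv hb⟩⟩
    · intro v hv hxx
      refine hnl v (mem_clN_of_mem s ρ hv) ?_
      show (clN s ρ G).lab v = x
      rw [clN_lab_mem s ρ hv]
      exact hxx
  obtain ⟨n, hn, hnG, hlabn⟩ := exists_node_of_gnew s ρ hxG
  exact hnl n hn hlabn

theorem clN_icl (G : Episode α) : clN s ρ (icl s ρ G) = icl s ρ G := by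
  have h0 : glist s ρ (icl s ρ G) = [] := by
    rw [glist, gnew_icl_empty]
    exact Finset.sort_empty _
  refine ext'_s5 ?_ rfl ?_
  · rw [clN_nodes, h0]
    simp
  · rw [clN_lab, h0]
    funext v
    rw [dif_neg]
    intro hc
    exact absurd hc.2.1 (by simp)

theorem icl_idem (G : Episode α) : icl s ρ (icl s ρ G) = icl s ρ G := by
  have h1 : icl s ρ (icl s ρ G) = clE s ρ (icl s ρ G) := by
    show clE s ρ (clN s ρ (icl s ρ G)) = clE s ρ (icl s ρ G)
    rw [clN_icl]
  rw [h1]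
  refine ext'_s5 rfl ?_ rfl
  funext x y
  apply propext
  constructor
  · rintro ⟨hx, hy, hall⟩
    exact ⟨hx, hy, fun f hf => hall f ((isOcc_icl_iff s ρ f).2 hf)⟩
  · rintro ⟨hx, hy, hall⟩
    exact ⟨hx, hy, fun f hf => hall f ((isOcc_icl_iff s ρ f).1 hf)⟩

theorem subep_icl (G : Episode α) : Subep G (icl s ρ G) := by
  refine ⟨G.nodes, ?_, rfl, ?_⟩
  · intro v hv
    exact mem_clN_of_mem s ρ hv
  · rintro s' ⟨f, hinj, hlab, hedge⟩
    refine ⟨f, hinj, ?_, ?_⟩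
    · intro v
      rw [hlab v]
      exact clN_lab_mem s ρ v.2
    · intro u v h
      refine hedge u v ?_
      refine ⟨u.2, v.2, ?_⟩
      exact ⟨mem_clN_of_mem s ρ u.2, mem_clN_of_mem s ρ v.2,
        fun g hg => hg.2.2.1 ⟨u.1, mem_clN_of_mem s ρ u.2⟩ ⟨v.1, mem_clN_of_mem s ρ v.2⟩ h⟩

noncomputable def rankOf (K : Episode α) (w : {v // v ∈ K.nodes}) : ℕ :=
  (Finset.univ.filter
    (fun w' : {v // v ∈ K.nodes} => K.lab w'.1 = K.lab w.1 ∧ K.edge w'.1 w.1)).card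

theorem rank_lt {K : Episode α} (hK : inS K) {w w' : {v // v ∈ K.nodes}}
    (hl : K.lab w.1 = K.lab w'.1) (he : K.edge w.1 w'.1) :
    rankOf K w < rankOf K w' := by
  classical
  apply Finset.card_lt_card
  have hsub : (Finset.univ.filter
      (fun a : {v // v ∈ K.nodes} => K.lab a.1 = K.lab w.1 ∧ K.edge a.1 w.1)) ⊆
      (Finset.univ.filter
      (fun a : {v // v ∈ K.nodes} => K.lab a.1 = K.lab w'.1 ∧ K.edge a.1 w'.1)) := by
    intro a ha
    rw [Finset.mem_filter] at ha ⊢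
    exact ⟨Finset.mem_univ _, ha.2.1.trans hl, hK.edge_trans ha.2.2 he⟩
  refine (Finset.ssubset_iff_of_subset hsub).2 ⟨w, ?_, ?_⟩
  · rw [Finset.mem_filter]
    exact ⟨Finset.mem_univ _, hl, he⟩
  · rw [Finset.mem_filter]
    rintro ⟨-, -, hww⟩
    exact hK.not_edge_self w.1 hww

theorem rank_label_inj {K : Episode α} (hK : inS K) {w w' : {v // v ∈ K.nodes}}
    (hl : K.lab w.1 = K.lab w'.1) (hr : rankOf K w = rankOf K w') : w = w' := by
  by_contra hne
  have hne' : w.1 ≠ w'.1 := fun h => hne (Subtype.ext h)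
  rcases hK.edge_total w.2 w'.2 hne' hl with he | he
  · exact absurd hr (Nat.ne_of_lt (rank_lt hK hl he))
  · exact absurd hr.symm (Nat.ne_of_lt (rank_lt hK hl.symm he))

theorem transGen_union_acyclic {β : Type*} (e : β → β → Prop)
    (htr : ∀ {a b c}, e a b → e b c → e a c) (hirr : ∀ a, ¬ e a a)
    (p q : β) (hpq : p ≠ q) (hnpq : ¬ e p q) (a : β) :
    ¬ Relation.TransGen (fun x y => e x y ∨ (x = q ∧ y = p)) a a := by
  intro h
  have key : ∀ x y, Relation.TransGen (fun x y => e x y ∨ (x = q ∧ y = p)) x y →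
      e x y ∨ ((x = q ∨ e x q) ∧ (p = y ∨ e p y)) := by
    intro x y hxy
    induction hxy with
    | single h1 =>
      rcases h1 with h1 | ⟨rfl, rfl⟩
      · exact Or.inl h1
      · exact Or.inr ⟨Or.inl rfl, Or.inl rfl⟩
    | tail h1 h2 ih =>
      rcases h2 with h2 | ⟨rfl, rfl⟩
      · rcases ih with h3 | ⟨h4, h5⟩
        · exact Or.inl (htr h3 h2)
        · refine Or.inr ⟨h4, Or.inr ?_⟩
          rcases h5 with rfl | h5
          · exact h2
          · exact htr h5 h2
      · rcases ih with h3 | ⟨h4, h5⟩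
        · exact Or.inr ⟨Or.inr h3, Or.inl rfl⟩
        · rcases h5 with h5 | h5
          · exact absurd h5 hpq
          · exact absurd h5 hnpq
  rcases key a a h with h1 | ⟨h2, h3⟩
  · exact hirr a h1
  · rcases h2 with rfl | h2 <;> rcases h3 with h3 | h3
    · exact hpq h3
    · exact hnpq h3
    · exact hnpq (h3 ▸ h2)
    · exact hnpq (htr h3 h2)

theorem goodmap_exists (G K : Episode α) (hK : inS K)
    (hcard : G.nodes.card = K.nodes.card)
    (hcov : ∀ s' : List α, Covers s' K → Covers s' G)
    (R : {v // v ∈ K.nodes} → {v // v ∈ K.nodes} → Prop)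
    (hRac : ∀ a, ¬ Relation.TransGen R a a)
    (hRe : ∀ a b : {v // v ∈ K.nodes}, K.edge a.1 b.1 → R a b) :
    ∃ (S : {v // v ∈ K.nodes} → {v // v ∈ K.nodes} → Prop)
      (φ : {v // v ∈ G.nodes} → {v // v ∈ K.nodes}),
      IsLinearOrder {v // v ∈ K.nodes} S ∧ (∀ a b, R a b → S a b) ∧
      Function.Bijective φ ∧ (∀ u, K.lab (φ u).1 = G.lab u.1) ∧
      ∀ u v, G.edge u.1 v.1 → S (φ u) (φ v) ∧ φ u ≠ φ v := by
  classical
  have hanti : ∀ a b : {v // v ∈ K.nodes},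
      Relation.ReflTransGen R a b → Relation.ReflTransGen R b a → a = b := by
    intro a b h1 h2
    rcases Relation.reflTransGen_iff_eq_or_transGen.1 h1 with heq | h1'
    · exact heq.symm
    rcases Relation.reflTransGen_iff_eq_or_transGen.1 h2 with heq | h2'
    · exact heq
    exact absurd (h1'.trans h2') (hRac a)
  haveI hpo : IsPartialOrder {v // v ∈ K.nodes} (Relation.ReflTransGen R) :=
    { refl := fun a => Relation.ReflTransGen.refl
      trans := fun a b c h1 h2 => Relation.ReflTransGen.trans h1 h2
      antisymm := hanti }
  obtain ⟨S, hS, hle⟩ := extend_partialOrder (Relation.ReflTransGen R)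
  haveI hSlin := hS
  have hSe : ∀ a b : {v // v ∈ K.nodes}, K.edge a.1 b.1 → S a b := fun a b h =>
    hle _ _ (Relation.ReflTransGen.single (hRe a b h))
  set l := Finset.sort Finset.univ S with hldef
  have hlnd : l.Nodup := Finset.sort_nodup _ S
  have hllen : l.length = K.nodes.card := by
    rw [hldef, Finset.length_sort, Finset.card_univ, Fintype.card_coe]
  set s' : List α := l.map (fun a => K.lab a.1) with hs'def
  have hs'len : s'.length = l.length := List.length_map _
  have hsorted := Finset.pairwise_sort Finset.univ S
  have hmono : ∀ (i j : Fin l.length), i < j → S (l.get i) (l.get j) := fun i j h =>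
    List.Pairwise.rel_get_of_lt hsorted h
  have hgetinj : Function.Injective l.get := List.nodup_iff_injective_get.1 hlnd
  have hcard' : Fintype.card (Fin l.length) = Fintype.card {v // v ∈ K.nodes} := by
    rw [Fintype.card_fin, hllen, Fintype.card_coe]
  have hgetbij : Function.Bijective l.get :=
    (Fintype.bijective_iff_injective_and_card _).2 ⟨hgetinj, hcard'⟩
  set eK := Equiv.ofBijective _ hgetbij with heKdef
  have heK : ∀ v, l.get (eK.symm v) = v := fun v => eK.apply_symm_apply v
  have hs'get : ∀ i : Fin l.length, s'.get (Fin.cast hs'len.symm i) = K.lab (l.get i).1 := by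
    intro i
    rw [List.get_eq_getElem, List.get_eq_getElem]
    simp only [Fin.coe_cast, hs'def]
    rw [List.getElem_map]
  have hcovK : Covers s' K := by
    refine ⟨fun v => Fin.cast hs'len.symm (eK.symm v), ?_, ?_, ?_⟩
    · intro u v h
      exact eK.symm.injective (Fin.cast_injective _ h)
    · intro v
      rw [hs'get (eK.symm v), heK v]
    · intro u v h
      have hne : u ≠ v := fun hee => hK.not_edge_self u.1 (by rw [hee] at h ⊢; exact h)
      rcases lt_trichotomy (eK.symm u) (eK.symm v) with hlt | heq | hgt
      · exact hlt
      · exact absurd (eK.symm.injective heq) hne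
      · exfalso
        have hmo := hmono _ _ hgt
        rw [heK u, heK v] at hmo
        exact hne (antisymm (hSe u v h) hmo)
  obtain ⟨g, hginj, hglab, hgedge⟩ := hcov s' hcovK
  have hgbij : Function.Bijective g := by
    refine (Fintype.bijective_iff_injective_and_card g).2 ⟨hginj, ?_⟩
    rw [Fintype.card_coe, Fintype.card_fin, hs'len, hllen, hcard]
  set φ : {v // v ∈ G.nodes} → {v // v ∈ K.nodes} :=
    fun u => l.get (Fin.cast hs'len (g u)) with hφdef
  have hφget : ∀ u, φ u = l.get (Fin.cast hs'len (g u)) := fun u => rfl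
  refine ⟨S, φ, hS, fun a b h => hle _ _ (Relation.ReflTransGen.single h), ?_, ?_, ?_⟩
  · constructor
    · intro u v h
      rw [hφget, hφget] at h
      exact hginj (Fin.cast_injective _ (hgetinj h))
    · intro w
      obtain ⟨i, hi⟩ := hgetbij.2 w
      obtain ⟨u, hu⟩ := hgbij.2 (Fin.cast hs'len.symm i)
      refine ⟨u, ?_⟩
      rw [hφget, hu]
      simp only [Fin.cast_cast, Fin.cast_eq_self]
      exact hi
  · intro u
    have h1 := hglab u
    have h2 := hs'get (Fin.cast hs'len (g u))
    simp only [Fin.cast_cast, Fin.cast_eq_self] at h2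
    rw [h2] at h1
    exact h1
  · intro u v h
    have hlt : g u < g v := hgedge u v h
    constructor
    · rw [hφget, hφget]
      exact hmono _ _ hlt
    · intro he
      rw [hφget, hφget] at he
      have := hginj (Fin.cast_injective _ (hgetinj he))
      rw [this] at hlt
      exact lt_irrefl _ hlt

theorem goodmap_rank (G K : Episode α) (hG : inS G) (hK : inS K)
    (S : {v // v ∈ K.nodes} → {v // v ∈ K.nodes} → Prop)
    (hS : IsLinearOrder {v // v ∈ K.nodes} S)
    (hSe : ∀ a b : {v // v ∈ K.nodes}, K.edge a.1 b.1 → S a b)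
    (φ : {v // v ∈ G.nodes} → {v // v ∈ K.nodes})
    (hbij : Function.Bijective φ) (hlab : ∀ u, K.lab (φ u).1 = G.lab u.1)
    (hedge : ∀ u v, G.edge u.1 v.1 → S (φ u) (φ v) ∧ φ u ≠ φ v)
    (u : {v // v ∈ G.nodes}) : rankOf K (φ u) = rankOf G u := by
  classical
  haveI := hS
  have himg : Finset.image φ (Finset.univ.filter
      (fun u' : {v // v ∈ G.nodes} => G.lab u'.1 = G.lab u.1 ∧ G.edge u'.1 u.1)) =
      Finset.univ.filter
      (fun w : {v // v ∈ K.nodes} => K.lab w.1 = K.lab (φ u).1 ∧ K.edge w.1 (φ u).1) := by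
    ext w
    simp only [Finset.mem_image, Finset.mem_filter, Finset.mem_univ, true_and]
    constructor
    · rintro ⟨u', ⟨hl', he'⟩, rfl⟩
      have hlf : K.lab (φ u').1 = K.lab (φ u).1 := by rw [hlab, hlab]; exact hl'
      refine ⟨hlf, ?_⟩
      have hne : (φ u').1 ≠ (φ u).1 := fun hh => (hedge u' u he').2 (Subtype.ext hh)
      rcases hK.edge_total (φ u').2 (φ u).2 hne hlf with hke | hke
      · exact hke
      · exact absurd (antisymm (hedge u' u he').1 (hSe _ _ hke))
          (hedge u' u he').2
    · rintro ⟨hlw, hew⟩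
      obtain ⟨u', rfl⟩ := hbij.2 w
      have hlu : G.lab u'.1 = G.lab u.1 := by rw [← hlab, ← hlab]; exact hlw
      have hneu : u' ≠ u := by
        rintro rfl
        exact hK.not_edge_self _ hew
      have hneu' : u'.1 ≠ u.1 := fun hh => hneu (Subtype.ext hh)
      rcases hG.edge_total u'.2 u.2 hneu' hlu with hge | hge
      · exact ⟨u', ⟨hlu, hge⟩, rfl⟩
      · exact absurd (antisymm (hSe _ _ hew) (hedge u u' hge).1)
          (fun hh => (hedge u u' hge).2 hh.symm)
  rw [rankOf, rankOf, ← himg, Finset.card_image_of_injective _ hbij.1]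

theorem exists_embed (G K : Episode α) (hG : inS G) (hK : inS K)
    (hcard : G.nodes.card = K.nodes.card)
    (hcov : ∀ s' : List α, Covers s' K → Covers s' G) :
    ∃ π : ℕ → ℕ, Set.InjOn π G.nodes ∧ (∀ v ∈ G.nodes, π v ∈ K.nodes) ∧
      (∀ v ∈ G.nodes, K.lab (π v) = G.lab v) ∧
      ∀ u v, G.edge u v → K.edge (π u) (π v) := by
  classical
  have hlift : ∀ a b : {v // v ∈ K.nodes},
      Relation.TransGen (fun a b : {v // v ∈ K.nodes} => K.edge a.1 b.1) a b →
      Relation.TransGen K.edge a.1 b.1 := by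
    intro a b h
    induction h with
    | single h => exact Relation.TransGen.single h
    | tail h1 h2 ih => exact ih.tail h2
  have hR0ac : ∀ a, ¬ Relation.TransGen
      (fun a b : {v // v ∈ K.nodes} => K.edge a.1 b.1) a a :=
    fun a h => hK.1 a.1 (hlift _ _ h)
  obtain ⟨S₀, φ₀, hS₀, hle₀, hbij₀, hlab₀, hedge₀⟩ :=
    goodmap_exists G K hK hcard hcov _ hR0ac (fun a b h => h)
  have hSe₀ : ∀ a b : {v // v ∈ K.nodes}, K.edge a.1 b.1 → S₀ a b :=
    fun a b h => hle₀ a b h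
  have hkey : ∀ u v, G.edge u.1 v.1 → K.edge (φ₀ u).1 (φ₀ v).1 := by
    intro u v h
    by_contra hne
    have hpq : φ₀ u ≠ φ₀ v := (hedge₀ u v h).2
    have hR1ac : ∀ a, ¬ Relation.TransGen
        (fun a b : {v // v ∈ K.nodes} =>
          K.edge a.1 b.1 ∨ (a = φ₀ v ∧ b = φ₀ u)) a a := by
      refine transGen_union_acyclic _ ?_ ?_ (φ₀ u) (φ₀ v) hpq ?_
      · intro a b c h1 h2
        exact hK.edge_trans h1 h2
      · intro a
        exact hK.not_edge_self a.1
      · exact hne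
    obtain ⟨S₁, φ₁, hS₁, hle₁, hbij₁, hlab₁, hedge₁⟩ :=
      goodmap_exists G K hK hcard hcov _ hR1ac (fun a b h => Or.inl h)
    have hSe₁ : ∀ a b : {v // v ∈ K.nodes}, K.edge a.1 b.1 → S₁ a b :=
      fun a b h => hle₁ a b (Or.inl h)
    have hphieq : φ₁ = φ₀ := by
      funext w
      refine rank_label_inj hK ?_ ?_
      · rw [hlab₁, hlab₀]
      · rw [goodmap_rank G K hG hK S₁ hS₁ hSe₁ φ₁ hbij₁ hlab₁ hedge₁ w,
          goodmap_rank G K hG hK S₀ hS₀ hSe₀ φ₀ hbij₀ hlab₀ hedge₀ w]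
    have h1 : S₁ (φ₀ u) (φ₀ v) := by
      have := (hedge₁ u v h).1
      rwa [hphieq] at this
    have h2 : S₁ (φ₀ v) (φ₀ u) := hle₁ _ _ (Or.inr ⟨rfl, rfl⟩)
    haveI := hS₁
    exact hpq (antisymm h1 h2)
  refine ⟨fun n => if h : n ∈ G.nodes then (φ₀ ⟨n, h⟩).1 else n, ?_, ?_, ?_, ?_⟩
  · intro a ha b hb hab
    have ha' : a ∈ G.nodes := ha
    have hb' : b ∈ G.nodes := hb
    simp only [dif_pos ha', dif_pos hb'] at hab
    have := hbij₀.1 (Subtype.ext hab)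
    exact congrArg Subtype.val this
  · intro v hv
    simp only [dif_pos hv]
    exact (φ₀ ⟨v, hv⟩).2
  · intro v hv
    simp only [dif_pos hv]
    exact hlab₀ ⟨v, hv⟩
  · intro u v h
    have hu := (G.edge_mem h).1
    have hv := (G.edge_mem h).2
    simp only [dif_pos hu, dif_pos hv]
    exact hkey ⟨u, hu⟩ ⟨v, hv⟩ h

theorem subep_icl_mono {G H : Episode α} (hG : inS G) (hH : inS H)
    (hGH : Subep G H) : Subep (icl s ρ G) (icl s ρ H) := by
  classical
  obtain ⟨U, hU, hUcard, hUcov⟩ := hGH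
  have hKS : inS (H.restrict U) := restrict_inS hH U hU
  have hKcard : G.nodes.card = (H.restrict U).nodes.card := hUcard.symm
  obtain ⟨π, hπinj, hπmem, hπlab, hπedge⟩ :=
    exists_embed G (H.restrict U) hG hKS hKcard hUcov
  have hπmemH : ∀ v ∈ G.nodes, π v ∈ H.nodes := fun v hv => hU (hπmem v hv)
  have hπlabH : ∀ v ∈ G.nodes, H.lab (π v) = G.lab v := hπlab
  have hπedgeH : ∀ u v, G.edge u v → H.edge (π u) (π v) :=
    fun u v h => (hπedge u v h).2.2
  have hπinj' : Set.InjOn π G.nodes := hπinj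
  have hoccGH : ∀ f, IsOcc s ρ H f →
      IsOcc s ρ G (fun u => f ⟨π u.1, hπmemH u.1 u.2⟩) :=
    fun f hf => isOcc_comp s ρ π hπinj' hπmemH hπlabH hπedgeH hf
  have htgt : ∀ x ∈ gnew s ρ G, ∃ t, t ∈ (clN s ρ H).nodes ∧
      (clN s ρ H).lab t = x ∧ ∀ u ∈ G.nodes, π u ≠ t := by
    intro x hx
    obtain ⟨hxs, hxw, hxl⟩ := gnew_spec s ρ hx
    by_cases hcase : ∃ w ∈ H.nodes, H.lab w = x
    · obtain ⟨w, hw, hwl⟩ := hcase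
      refine ⟨w, mem_clN_of_mem s ρ hw, by rw [clN_lab_mem s ρ hw]; exact hwl, ?_⟩
      intro u hu he
      apply hxl u hu
      rw [← hπlabH u hu, he, hwl]
    · have hxH : x ∈ gnew s ρ H := by
        refine gnew_mem s ρ hxs ?_ ?_
        · intro f hf
          obtain ⟨i, hi1, ⟨u, hu⟩, ⟨v, hv⟩⟩ := hxw _ (hoccGH f hf)
          exact ⟨i, hi1, ⟨⟨π u.1, hπmemH u.1 u.2⟩, hu⟩, ⟨⟨π v.1, hπmemH v.1 v.2⟩, hv⟩⟩
        · intro v hv hlv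
          exact hcase ⟨v, hv, hlv⟩
      obtain ⟨t, ht, htH, htl⟩ := exists_node_of_gnew s ρ hxH
      exact ⟨t, ht, htl, fun u hu he => htH (he ▸ hπmemH u hu)⟩
  choose tgt htgt1 htgt2 htgt3 using htgt
  set πh : ℕ → ℕ := fun n =>
    if h : n ∈ G.nodes then π n
    else if h2 : n ∈ (clN s ρ G).nodes then
      tgt ((clN s ρ G).lab n) (lab_new_mem s ρ h2 h)
    else n with hπhdef
  have hπhold : ∀ n (h : n ∈ G.nodes), πh n = π n := by
    intro n h
    rw [hπhdef]
    simp only [dif_pos h]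
  have hπhnew : ∀ n (h2 : n ∈ (clN s ρ G).nodes) (h : n ∉ G.nodes),
      πh n = tgt ((clN s ρ G).lab n) (lab_new_mem s ρ h2 h) := by
    intro n h2 h
    rw [hπhdef]
    simp only [dif_neg h, dif_pos h2]
  have hπhmem : ∀ n ∈ (clN s ρ G).nodes, πh n ∈ (clN s ρ H).nodes := by
    intro n hn
    by_cases h : n ∈ G.nodes
    · rw [hπhold n h]
      exact mem_clN_of_mem s ρ (hπmemH n h)
    · rw [hπhnew n hn h]
      exact htgt1 _ _
  have hπhlab : ∀ n ∈ (clN s ρ G).nodes,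
      (clN s ρ H).lab (πh n) = (clN s ρ G).lab n := by
    intro n hn
    by_cases h : n ∈ G.nodes
    · rw [hπhold n h, clN_lab_mem s ρ (hπmemH n h), hπlabH n h, clN_lab_mem s ρ h]
    · rw [hπhnew n hn h]
      exact htgt2 _ _
  have hπhinj : Set.InjOn πh (clN s ρ G).nodes := by
    intro a ha b hb hab
    have ha' : a ∈ (clN s ρ G).nodes := ha
    have hb' : b ∈ (clN s ρ G).nodes := hb
    by_cases h1 : a ∈ G.nodes <;> by_cases h2 : b ∈ G.nodes
    · rw [hπhold a h1, hπhold b h2] at hab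
      exact hπinj' h1 h2 hab
    · exfalso
      rw [hπhold a h1, hπhnew b hb' h2] at hab
      exact htgt3 _ _ a h1 hab
    · exfalso
      rw [hπhold b h2, hπhnew a ha' h1] at hab
      exact htgt3 _ _ b h2 hab.symm
    · by_contra hne
      apply lab_new_inj s ρ ha' h1 hb' h2 hne
      rw [← hπhlab a ha', ← hπhlab b hb', hab]
  have hπhedge : ∀ u v, (clN s ρ G).edge u v → (clN s ρ H).edge (πh u) (πh v) := by
    intro u v h
    have h' : G.edge u v := h
    have hu := (G.edge_mem h').1
    have hv := (G.edge_mem h').2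
    show H.edge (πh u) (πh v)
    rw [hπhold u hu, hπhold v hv]
    exact hπedgeH u v h'
  have hocc2 : ∀ f, IsOcc s ρ (clN s ρ H) f →
      IsOcc s ρ (clN s ρ G) (fun u => f ⟨πh u.1, hπhmem u.1 u.2⟩) :=
    fun f hf => isOcc_comp s ρ πh hπhinj hπhmem hπhlab hπhedge hf
  refine ⟨(clN s ρ G).nodes.image πh, ?_, ?_, ?_⟩
  · intro n hn
    obtain ⟨m, hm, rfl⟩ := Finset.mem_image.1 hn
    exact hπhmem m hm
  · exact Finset.card_image_of_injOn hπhinj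
  · rintro s' ⟨f', hf'inj, hf'lab, hf'edge⟩
    refine ⟨fun v => f' ⟨πh v.1, Finset.mem_image_of_mem _ v.2⟩, ?_, ?_, ?_⟩
    · intro a b h
      have h2 : πh a.1 = πh b.1 := congrArg Subtype.val (hf'inj h)
      exact Subtype.ext (hπhinj a.2 b.2 h2)
    · intro v
      rw [hf'lab]
      exact hπhlab v.1 v.2
    · intro u v h
      obtain ⟨hu, hv, hall⟩ := h
      apply hf'edge
      refine ⟨Finset.mem_image_of_mem _ u.2, Finset.mem_image_of_mem _ v.2, ?_⟩
      refine ⟨hπhmem u.1 u.2, hπhmem v.1 v.2, ?_⟩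
      intro f hf
      exact hall _ (hocc2 f hf)

end aux

end Episode
open Episode in
/-- The i-closure `icl = cl_E ∘ cl_N` is an idempotent and monotonic extension
operator on strict transitively closed episodes occurring in `s` within a
window of length at most `ρ`. -/
theorem stmt5 {α : Type*} [LinearOrder α] (s : List α) (ρ : ℕ)
    (G H : Episode α) (hG : inS G) (hH : inS H)
    (hGocc : Occurs s ρ G) (hHocc : Occurs s ρ H) :
    Subep G (icl s ρ G) ∧
    icl s ρ (icl s ρ G) = icl s ρ G ∧
    (Subep G H → Subep (icl s ρ G) (icl s ρ H)) := by
  exact ⟨subep_icl s ρ G, icl_idem s ρ G, fun h => subep_icl_mono s ρ hG hH h⟩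
end

section
/- Let G be a strict, transitively closed episode and let s = s_1⋯s_L be a sequence. Let k be the smallest index such that s_k = lab(v) for some source node v of G (a node with no incoming edges). Then s covers G if and only if s[k+1, L] covers G − v. -/
open scoped Classical

open Episode in
/-- Let `v` be a source node of a strict transitively closed episode `G`, and
let `k` be the smallest index of `s` whose symbol is the label of a source
node of `G`, with `s_k = lab(v)`.  Then `s` covers `G` iff the suffix of `s`
after position `k` covers `G − v`. -/
theorem stmt6 {α : Type*} (G : Episode α) (hG : inS G) (s : List α)
    (v : ℕ) (hv : IsSource G v) (k : Fin s.length) (hk : s.get k = G.lab v)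
    (hmin : ∀ j : Fin s.length,
      (∃ w, IsSource G w ∧ s.get j = G.lab w) → k ≤ j) :
    Covers s G ↔ Covers (s.drop ((k : ℕ) + 1)) (G.eraseNode v) := by
  obtain ⟨hvmem, hvsrc⟩ := hv
  constructor
  · rintro ⟨f, hinj, hlab', hedge⟩
    have claim1 : ∀ n, ∀ w : {x // x ∈ G.nodes}, (f w : ℕ) = n →
        ¬ ((f w : ℕ) < (k : ℕ)) := by
      intro n
      induction n using Nat.strong_induction_on with
      | _ n ih =>
        intro w hw hlt
        by_cases hs : G.IsSource w.1
        · have h1 : k ≤ f w := hmin (f w) ⟨w.1, hs, hlab' w⟩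
          have h2 : (k : ℕ) ≤ (f w : ℕ) := h1
          omega
        · have hw' : ∃ u, G.edge u w.1 := by
            by_contra h
            push_neg at h
            exact hs ⟨w.2, h⟩
          obtain ⟨u, hu⟩ := hw'
          have hum := (G.edge_mem hu).1
          have hlt2 : (f ⟨u, hum⟩ : ℕ) < (f w : ℕ) := hedge ⟨u, hum⟩ w hu
          exact ih (f ⟨u, hum⟩) (by omega) ⟨u, hum⟩ rfl (by omega)
    have claim2 : ∀ w : {x // x ∈ G.nodes}, w.1 ≠ v → (k : ℕ) < (f w : ℕ) := by
      intro w hne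
      have h1 := claim1 _ w rfl
      by_contra h
      have heq : (f w : ℕ) = (k : ℕ) := by omega
      have hfk : f w = k := Fin.ext heq
      have hlabw : s.get k = G.lab w.1 := hfk ▸ hlab' w
      have hlabeq : G.lab w.1 = G.lab v := hlabw.symm.trans hk
      rcases hG.2.2 w.1 w.2 v hvmem hne hlabeq with hp | hp
      · exact hvsrc w.1 (hG.2.1 hp)
      · have he := hG.2.1 hp
        have hlt : (f ⟨v, hvmem⟩ : ℕ) < (f w : ℕ) := hedge ⟨v, hvmem⟩ w he
        have := claim1 _ ⟨v, hvmem⟩ rfl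
        omega
    have hmem : ∀ w : {x // x ∈ (G.eraseNode v).nodes}, w.1 ∈ G.nodes :=
      fun w => (Finset.mem_erase.mp w.2).2
    have hne : ∀ w : {x // x ∈ (G.eraseNode v).nodes}, w.1 ≠ v :=
      fun w => (Finset.mem_erase.mp w.2).1
    have hbig : ∀ w, (k : ℕ) < (f ⟨w.1, hmem w⟩ : ℕ) := fun w => claim2 _ (hne w)
    have hbnd : ∀ w : {x // x ∈ (G.eraseNode v).nodes},
        (f ⟨w.1, hmem w⟩ : ℕ) - ((k : ℕ) + 1) < (s.drop ((k : ℕ) + 1)).length := by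
      intro w
      have h1 := hbig w
      have h2 := (f ⟨w.1, hmem w⟩).isLt
      rw [List.length_drop]
      omega
    refine ⟨fun w => ⟨(f ⟨w.1, hmem w⟩ : ℕ) - ((k : ℕ) + 1), hbnd w⟩, ?_, ?_, ?_⟩
    · intro w1 w2 hEq
      have h' : (f ⟨w1.1, hmem w1⟩ : ℕ) - ((k : ℕ) + 1)
          = (f ⟨w2.1, hmem w2⟩ : ℕ) - ((k : ℕ) + 1) := congrArg Fin.val hEq
      have hb1 := hbig w1
      have hb2 := hbig w2
      have hfe : f ⟨w1.1, hmem w1⟩ = f ⟨w2.1, hmem w2⟩ := Fin.ext (by omega)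
      have h2 := hinj hfe
      have h3 : w1.1 = w2.1 := Subtype.mk_eq_mk.mp h2
      exact Subtype.ext h3
    · intro w
      have harith : (k : ℕ) + 1 + ((f ⟨w.1, hmem w⟩ : ℕ) - ((k : ℕ) + 1))
          = (f ⟨w.1, hmem w⟩ : ℕ) := by
        have := hbig w; omega
      have hl := hlab' ⟨w.1, hmem w⟩
      simp only [List.get_eq_getElem, List.getElem_drop] at *
      show s[(k : ℕ) + 1 + ((f ⟨w.1, hmem w⟩ : ℕ) - ((k : ℕ) + 1))]'(by omega)
          = (G.eraseNode v).lab w.1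
      simp only [harith]
      exact hl
    · intro u w he
      obtain ⟨he', -, -⟩ := he
      have hlt : (f ⟨u.1, hmem u⟩ : ℕ) < (f ⟨w.1, hmem w⟩ : ℕ) :=
        hedge ⟨u.1, hmem u⟩ ⟨w.1, hmem w⟩ he'
      have hb1 := hbig u
      exact Fin.mk_lt_mk.mpr (by omega)
  · rintro ⟨g, ginj, glab, gedge⟩
    have hmem' : ∀ (w : {x // x ∈ G.nodes}), w.1 ≠ v → w.1 ∈ (G.eraseNode v).nodes :=
      fun w h => Finset.mem_erase.mpr ⟨h, w.2⟩
    have hbnd : ∀ (w : {x // x ∈ G.nodes}) (h : w.1 ≠ v),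
        (k : ℕ) + 1 + (g ⟨w.1, hmem' w h⟩ : ℕ) < s.length := by
      intro w h
      have h1 : ((g ⟨w.1, hmem' w h⟩ : ℕ)) < s.length - ((k : ℕ) + 1) :=
        lt_of_lt_of_eq (g ⟨w.1, hmem' w h⟩).isLt List.length_drop
      have h2 := k.isLt
      omega
    refine ⟨fun w => if h : w.1 = v then k else ⟨_, hbnd w h⟩, ?_, ?_, ?_⟩
    · intro w1 w2 hEq
      by_cases h1 : w1.1 = v <;> by_cases h2 : w2.1 = v
      · exact Subtype.ext (h1.trans h2.symm)
      · simp only [dif_pos h1, dif_neg h2] at hEq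
        have hval := congrArg Fin.val hEq
        simp only [Fin.val_mk] at hval
        omega
      · simp only [dif_neg h1, dif_pos h2] at hEq
        have hval := congrArg Fin.val hEq
        simp only [Fin.val_mk] at hval
        omega
      · simp only [dif_neg h1, dif_neg h2] at hEq
        have hv' : (g ⟨w1.1, hmem' w1 h1⟩ : ℕ) = (g ⟨w2.1, hmem' w2 h2⟩ : ℕ) := by
          have := congrArg Fin.val hEq
          simpa using this
        have hg := ginj (Fin.ext hv')
        have h3 : w1.1 = w2.1 := Subtype.mk_eq_mk.mp hg
        exact Subtype.ext h3
    · intro w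
      by_cases h : w.1 = v
      · simp only [dif_pos h]
        rw [hk, h]
      · simp only [dif_neg h]
        have hl := glab ⟨w.1, hmem' w h⟩
        simp only [List.get_eq_getElem, List.getElem_drop] at hl
        exact hl
    · intro u w he
      have hwv : w.1 ≠ v := fun hwv => hvsrc u.1 (hwv ▸ he)
      by_cases huv : u.1 = v
      · simp only [dif_pos huv, dif_neg hwv]
        rw [Fin.lt_def]
        simp only [Fin.val_mk]
        omega
      · simp only [dif_neg huv, dif_neg hwv]
        have he' : (G.eraseNode v).edge u.1 w.1 := ⟨he, huv, hwv⟩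
        have hlt : (g ⟨u.1, hmem' u huv⟩ : ℕ) < (g ⟨w.1, hmem' w hwv⟩ : ℕ) :=
          gedge ⟨u.1, hmem' u huv⟩ ⟨w.1, hmem' w hwv⟩ he'
        exact Fin.mk_lt_mk.mpr (by omega)
end

section
/- Let G be a strict, transitively closed episode and let s be a sequence covering G. Let m = g(G;s) be the greedy mapping and let [a,b] be the first minimal window of G in s (the minimal window with the smallest right endpoint). Then max m = b. -/
open scoped Classical

namespace Episode

variable {α : Type*}

private lemma transGen_eraseNode {G : Episode α} {v u w : ℕ}
    (h : Relation.TransGen (G.eraseNode v).edge u w) :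
    Relation.TransGen G.edge u w ∧ u ≠ v ∧ w ≠ v := by
  refine ⟨Relation.TransGen.mono (fun x y (hxy : (G.eraseNode v).edge x y) => hxy.1) _ _ h, ?_, ?_⟩
  · induction h with
    | single h1 => exact h1.2.1
    | tail h1 h2 ih => exact ih
  · cases h with
    | single h1 => exact h1.2.2
    | tail h1 h2 => exact h2.2.2

private lemma inS_eraseNode {G : Episode α} (h : inS G) (v : ℕ) :
    inS (G.eraseNode v) := by
  obtain ⟨hac, htc, hst⟩ := h
  refine ⟨fun w hw => hac w (transGen_eraseNode hw).1, ?_, ?_⟩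
  · intro x y hxy
    obtain ⟨h1, h2, h3⟩ := transGen_eraseNode hxy
    exact ⟨htc h1, h2, h3⟩
  · intro x hx y hy hne hlab
    have hx' : x ∈ G.nodes := Finset.mem_of_mem_erase hx
    have hy' : y ∈ G.nodes := Finset.mem_of_mem_erase hy
    have hxv : x ≠ v := (Finset.mem_erase.mp hx).1
    have hyv : y ≠ v := (Finset.mem_erase.mp hy).1
    rcases hst x hx' y hy' hne hlab with h1 | h1
    · exact Or.inl (Relation.TransGen.single ⟨htc h1, hxv, hyv⟩)
    · exact Or.inr (Relation.TransGen.single ⟨htc h1, hyv, hxv⟩)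

private lemma greedy_valid (s : List α) {t : ℕ} {G : Episode α} {m : ℕ → ℕ}
    (hm : GreedyFrom s t G m) :
    (∀ v ∈ G.nodes, t ≤ m v ∧ ∃ h : m v < s.length, s.get ⟨m v, h⟩ = G.lab v) ∧
    (∀ u ∈ G.nodes, ∀ v ∈ G.nodes, u ≠ v → m u ≠ m v) ∧
    (∀ u v, G.edge u v → m u < m v) := by
  induction hm with
  | empty t G f hG =>
    refine ⟨?_, ?_, ?_⟩
    · intro w hw; rw [hG] at hw; simp at hw
    · intro u hu; rw [hG] at hu; simp at hu
    · intro u w h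
      have := (G.edge_mem h).1
      rw [hG] at this; simp at this
  | step t G f v k hv ht hk hlab hmin hfv hrec ih =>
    obtain ⟨ih1, ih2, ih3⟩ := ih
    refine ⟨?_, ?_, ?_⟩
    · intro w hw
      by_cases hwv : w = v
      · subst hwv; rw [hfv]; exact ⟨ht, hk, hlab⟩
      · have hw' : w ∈ (G.eraseNode v).nodes := Finset.mem_erase.mpr ⟨hwv, hw⟩
        obtain ⟨h1, h2⟩ := ih1 w hw'
        exact ⟨le_trans ht (by omega), h2⟩
    · intro u hu w hw hne
      by_cases huv : u = v
      · have hwv : w ≠ v := fun h => hne (huv.trans h.symm)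
        have hw' : w ∈ (G.eraseNode v).nodes := Finset.mem_erase.mpr ⟨hwv, hw⟩
        have := (ih1 w hw').1
        rw [huv, hfv]; omega
      · by_cases hwv : w = v
        · have hu' : u ∈ (G.eraseNode v).nodes := Finset.mem_erase.mpr ⟨huv, hu⟩
          have := (ih1 u hu').1
          rw [hwv, hfv]; omega
        · exact ih2 u (Finset.mem_erase.mpr ⟨huv, hu⟩) w
            (Finset.mem_erase.mpr ⟨hwv, hw⟩) hne
    · intro x y hxy
      by_cases hy : y = v
      · subst hy; exact absurd hxy (hv.2 x)
      · by_cases hx : x = v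
        · subst hx
          have hym : y ∈ G.nodes := (G.edge_mem hxy).2
          have hy' : y ∈ (G.eraseNode x).nodes := Finset.mem_erase.mpr ⟨hy, hym⟩
          have := (ih1 y hy').1
          rw [hfv]; omega
        · exact ih3 x y ⟨hxy, hx, hy⟩

private lemma greedy_le (s : List α) {t : ℕ} {G : Episode α} {m : ℕ → ℕ}
    (hm : GreedyFrom s t G m) :
    ∀ (B : ℕ), inS G →
    ∀ c : {v // v ∈ G.nodes} → Fin s.length,
      (∀ v, s.get (c v) = G.lab v.1) →
      (∀ u v, G.edge u.1 v.1 → c u < c v) →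
      (∀ v, t ≤ (c v : ℕ) ∧ (c v : ℕ) ≤ B) →
      ∀ v ∈ G.nodes, m v ≤ B := by
  induction hm with
  | empty t G f hG =>
    intro B _ c _ _ _ w hw; rw [hG] at hw; simp at hw
  | step t G f v k hv ht hk hlab hmin hfv hrec ih =>
    intro B hS c hclab hcord hcbnd w hw
    have hvmem : v ∈ G.nodes := hv.1
    have key : ∀ n (u : {x // x ∈ G.nodes}), (c u : ℕ) = n → k ≤ (c u : ℕ) := by
      intro n
      induction n using Nat.strong_induction_on with
      | _ n ih2 =>
        intro u hun
        by_contra hlt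
        push_neg at hlt
        by_cases hs : G.IsSource u.1
        · exact hmin (c u) (c u).2 (hcbnd u).1 hlt ⟨u.1, hs, hclab u⟩
        · simp only [IsSource, not_and, not_forall, not_not] at hs
          obtain ⟨x, hx⟩ := hs u.2
          have hxm : x ∈ G.nodes := (G.edge_mem hx).1
          have h1 : (c ⟨x, hxm⟩ : ℕ) < (c u : ℕ) := hcord ⟨x, hxm⟩ u hx
          have h2 := ih2 (c ⟨x, hxm⟩ : ℕ) (by omega) ⟨x, hxm⟩ rfl
          omega
    have key' : ∀ u : {x // x ∈ G.nodes}, k ≤ (c u : ℕ) := fun u => key _ u rfl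
    have huk : ∀ u : {x // x ∈ G.nodes}, (c u : ℕ) = k → u.1 = v := by
      intro u hu
      by_contra hne
      have hlabu : G.lab u.1 = G.lab v := by
        calc G.lab u.1 = s.get (c u) := (hclab u).symm
          _ = s.get ⟨k, hk⟩ := by congr 1; exact Fin.ext hu
          _ = G.lab v := hlab
      obtain ⟨hac, htc, hst⟩ := hS
      rcases hst u.1 u.2 v hvmem hne hlabu with hp | hp
      · exact hv.2 u.1 (htc hp)
      · have h1 : (c ⟨v, hvmem⟩ : ℕ) < (c u : ℕ) := hcord ⟨v, hvmem⟩ u (htc hp)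
        have h2 := key' ⟨v, hvmem⟩
        omega
    by_cases hwv : w = v
    · subst hwv
      rw [hfv]
      have h1 := key' ⟨w, hw⟩
      have h2 := (hcbnd ⟨w, hw⟩).2
      omega
    · have hw' : w ∈ (G.eraseNode v).nodes := Finset.mem_erase.mpr ⟨hwv, hw⟩
      have hbnd' : ∀ u : {x // x ∈ (G.eraseNode v).nodes},
          k + 1 ≤ (c ⟨u.1, Finset.mem_of_mem_erase u.2⟩ : ℕ) ∧
          (c ⟨u.1, Finset.mem_of_mem_erase u.2⟩ : ℕ) ≤ B := by
        intro u
        have h1 := key' ⟨u.1, Finset.mem_of_mem_erase u.2⟩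
        have h2 := (hcbnd ⟨u.1, Finset.mem_of_mem_erase u.2⟩).2
        have h3 : (c ⟨u.1, Finset.mem_of_mem_erase u.2⟩ : ℕ) ≠ k := fun h =>
          (Finset.mem_erase.mp u.2).1 (huk _ h)
        exact ⟨by omega, h2⟩
      exact ih B (inS_eraseNode hS v)
        (fun u => c ⟨u.1, Finset.mem_of_mem_erase u.2⟩) (fun u => hclab _)
        (fun u u' h => hcord _ _ h.1) hbnd' w hw' 

private lemma window_length (s : List α) (a b : ℕ) (hb : b < s.length) :
    (window s a b).length = b + 1 - a := by
  simp [window]; omega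

private lemma window_get (s : List α) (a b : ℕ) (hb : b < s.length) (i : ℕ)
    (hi : i < (window s a b).length) (h2 : a + i < s.length) :
    (window s a b).get ⟨i, hi⟩ = s.get ⟨a + i, h2⟩ := by
  have hi' : i < (s.take (b + 1)).length - a := by
    simpa [window] using hi
  simp only [window, List.get_eq_getElem, List.getElem_drop, List.getElem_take]

private lemma covers_window_iff (s : List α) (G : Episode α) {a b : ℕ}
    (hb : b < s.length) :
    Covers (window s a b) G ↔ ∃ c : {v // v ∈ G.nodes} → Fin s.length,
      Function.Injective c ∧ (∀ v, s.get (c v) = G.lab v.1) ∧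
      (∀ u v, G.edge u.1 v.1 → c u < c v) ∧
      ∀ v, a ≤ (c v : ℕ) ∧ (c v : ℕ) ≤ b := by
  have hlen := window_length s a b hb
  constructor
  · rintro ⟨f, hinj, hlab, hord⟩
    have hbd : ∀ v, a + (f v : ℕ) < s.length := by
      intro v; have := (f v).2; omega
    refine ⟨fun v => ⟨a + (f v : ℕ), hbd v⟩, ?_, ?_, ?_, ?_⟩
    · intro u u' h
      have h1 : a + (f u : ℕ) = a + (f u' : ℕ) := congrArg Fin.val h
      exact hinj (Fin.ext (by omega))
    · intro v
      rw [← window_get s a b hb (f v) (f v).2 (hbd v)]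
      exact hlab v
    · intro u u' h
      exact Fin.mk_lt_mk.mpr (by have := hord u u' h; omega)
    · intro v
      have h1 := (f v).2
      refine ⟨Nat.le_add_right a _, ?_⟩
      show a + (f v : ℕ) ≤ b
      omega
  · rintro ⟨c, hinj, hlab, hord, hbnd⟩
    have hbd : ∀ v, (c v : ℕ) - a < (window s a b).length := by
      intro v; have := hbnd v; omega
    refine ⟨fun v => ⟨(c v : ℕ) - a, hbd v⟩, ?_, ?_, ?_⟩
    · intro u u' h
      have h1 : (c u : ℕ) - a = (c u' : ℕ) - a := congrArg Fin.val h
      have h2 := hbnd u; have h3 := hbnd u'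
      exact hinj (Fin.ext (by omega))
    · intro v
      have hvlt : a + ((c v : ℕ) - a) < s.length := by
        have := hbnd v; omega
      rw [window_get s a b hb _ (hbd v) hvlt]
      have : (⟨a + ((c v : ℕ) - a), hvlt⟩ : Fin s.length) = c v :=
        Fin.ext (by have := hbnd v; simp; omega)
      rw [this]; exact hlab v
    · intro u u' h
      have h1 : (c u : ℕ) < (c u' : ℕ) := hord u u' h
      have h2 := hbnd u; have h3 := hbnd u'
      exact Fin.mk_lt_mk.mpr (by omega)

private lemma exists_isMinimalWindow (s : List α) (G : Episode α) {a b : ℕ}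
    (hab : a ≤ b) (hb : b < s.length) (hc : Covers (window s a b) G) :
    ∃ a' b', a ≤ a' ∧ b' ≤ b ∧ IsMinimalWindow s G a' b' := by
  classical
  set S : Set (ℕ × ℕ) :=
    {p | a ≤ p.1 ∧ p.2 ≤ b ∧ p.1 ≤ p.2 ∧ Covers (window s p.1 p.2) G} with hS
  have hSne : (a, b) ∈ S := ⟨le_refl a, le_refl b, hab, hc⟩
  set Y : Set ℕ := {y | ∃ x, (x, y) ∈ S} with hY
  have hYne : b ∈ Y := ⟨a, hSne⟩
  set b' := sInf Y with hb'
  have hb'Y : b' ∈ Y := Nat.sInf_mem ⟨b, hYne⟩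
  obtain ⟨x0, hx0⟩ := hb'Y
  have hb'le : b' ≤ b := Nat.sInf_le hYne
  set X : Set ℕ := {x | (x, b') ∈ S} with hX
  have hXbdd : BddAbove X := ⟨b', fun x hx => hx.2.2.1⟩
  have hXne : X.Nonempty := ⟨x0, hx0⟩
  set a' := sSup X with ha'
  have ha'X : a' ∈ X := Nat.sSup_mem hXne hXbdd
  refine ⟨a', b', ha'X.1, hb'le, ha'X.2.2.1, lt_of_le_of_lt ha'X.2.1 hb,
    ha'X.2.2.2, ?_⟩
  intro a'' b'' h1 h2 h3 hne hcov
  have hmem : (a'', b'') ∈ S := ⟨le_trans ha'X.1 h1, le_trans h2 hb'le, h3, hcov⟩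
  have hb'' : b' ≤ b'' := Nat.sInf_le ⟨a'', hmem⟩
  have hbeq : b'' = b' := le_antisymm h2 hb''
  have ha''X : a'' ∈ X := by rw [hX]; simp only [Set.mem_setOf_eq]; rw [← hbeq]; exact hmem
  have ha'' : a'' ≤ a' := le_csSup hXbdd ha''X
  exact hne (by rw [le_antisymm ha'' h1, hbeq])

end Episode

open Episode in
/-- If `s` covers a strict transitively closed episode `G`, `m` is the greedy
mapping `g(G;s)` and `[a,b]` is the first minimal window of `G` in `s`, then
`max m = b`. -/
theorem stmt7 {α : Type*} (G : Episode α) (hG : inS G) (s : List α)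
    (hcov : Covers s G) (hne : G.nodes.Nonempty)
    (m : ℕ → ℕ) (hm : GreedyFrom s 0 G m)
    (a b : ℕ) (hw : IsMinimalWindow s G a b)
    (hfirst : ∀ a' b', IsMinimalWindow s G a' b' → b ≤ b') :
    (∀ v ∈ G.nodes, m v ≤ b) ∧ ∃ v ∈ G.nodes, m v = b := by
  obtain ⟨hab, hb, hcw, hminw⟩ := hw
  obtain ⟨c, hcinj, hclab, hcord, hcbnd⟩ := (covers_window_iff s G hb).mp hcw
  have part1 : ∀ v ∈ G.nodes, m v ≤ b :=
    greedy_le s hm b hG c hclab hcord (fun v => ⟨Nat.zero_le _, (hcbnd v).2⟩)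
  refine ⟨part1, ?_⟩
  obtain ⟨hval, hinj, hord⟩ := greedy_valid s hm
  obtain ⟨v0, hv0, hB⟩ := Finset.exists_mem_eq_sup' hne m
  have hBb : G.nodes.sup' hne m ≤ b := by rw [hB]; exact part1 v0 hv0
  have hmlt : ∀ v ∈ G.nodes, m v < s.length := fun v hv => ((hval v hv).2).choose
  have hBlen : G.nodes.sup' hne m < s.length := by rw [hB]; exact hmlt v0 hv0
  have hcov2 : Covers (window s 0 (G.nodes.sup' hne m)) G := by
    rw [covers_window_iff s G hBlen]
    refine ⟨fun v => ⟨m v.1, hmlt v.1 v.2⟩, ?_, ?_, ?_, ?_⟩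
    · intro u u' h
      by_contra hne2
      exact hinj u.1 u.2 u'.1 u'.2 (fun hv => hne2 (Subtype.ext hv))
        (congrArg Fin.val h)
    · intro v
      exact ((hval v.1 v.2).2).choose_spec
    · intro u u' h
      exact Fin.mk_lt_mk.mpr (hord u.1 u'.1 h)
    · intro v
      exact ⟨Nat.zero_le _, Finset.le_sup' m v.2⟩
  obtain ⟨a', b', -, hb'B, hmw⟩ :=
    exists_isMinimalWindow s G (Nat.zero_le _) hBlen hcov2
  have hbb' := hfirst a' b' hmw
  refine ⟨v0, hv0, ?_⟩
  have hBe : m v0 = G.nodes.sup' hne m := hB.symm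
  omega
end
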